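/- arXiv:2311.12231 — 7 statements merged into one kernel-verified Lean document; each statement's English description precedes it below -/
import Mathlib

section
/- Let V be an n-dimensional real vector space, X a k-dimensional linear subspace of V, and B₁, B₂ ⊂ V two convex sets with 0 in their interiors. Assume that B₁ and B₂ coincide near X, and that B₁ is contained in a k-cylinder C with base B₁ ∩ X. Then B₂ ⊂ C as well. -/
open Module Set Pointwise

/-- The Grassmannian of `k`-dimensional linear subspaces of `V`. -/
abbrev Gr (k : ℕ) (V : Type*) [AddCommGroup V] [Module ℝ V] :=
  {X : Submodule ℝ V // Module.finrank ℝ X = k}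

/-- The standard (quotient) topology on the Grassmannian, coinduced from the space of
linearly independent `k`-tuples of vectors. -/
noncomputable instance grTop (k : ℕ) (V : Type*) [AddCommGroup V] [Module ℝ V]
    [TopologicalSpace V] : TopologicalSpace (Gr k V) :=
  TopologicalSpace.coinduced
    (fun v : {v : Fin k → V // LinearIndependent ℝ v} =>
      (⟨Submodule.span ℝ (Set.range v.1), by
          rw [finrank_span_eq_card v.2, Fintype.card_fin]⟩ : Gr k V))
    inferInstance

/-- A convex body: a compact convex set with nonempty interior. -/
def IsConvexBody {V : Type*} [AddCommGroup V] [Module ℝ V] [TopologicalSpace V]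
    (B : Set V) : Prop :=
  IsCompact B ∧ Convex ℝ B ∧ (interior B).Nonempty

/-- `C` is a `k`-cylinder with base `K` lying in the `k`-dimensional subspace `X`:
`K` is a `k`-dimensional convex body in `X` and `C = K + Y` for some complement `Y` of `X`. -/
def IsCylinderWithBase {V : Type*} [AddCommGroup V] [Module ℝ V] [TopologicalSpace V]
    (k : ℕ) (C K : Set V) (X : Submodule ℝ V) : Prop :=
  Module.finrank ℝ X = k ∧ K ⊆ (X : Set V) ∧ IsCompact K ∧ Convex ℝ K ∧
    (interior ((↑) ⁻¹' K : Set X)).Nonempty ∧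
    ∃ Y : Submodule ℝ V, IsCompl X Y ∧ C = K + (Y : Set V)

/-- `C` is a `k`-cylinder. -/
def IsCylinder {V : Type*} [AddCommGroup V] [Module ℝ V] [TopologicalSpace V]
    (k : ℕ) (C : Set V) : Prop :=
  ∃ (K : Set V) (X : Submodule ℝ V), IsCylinderWithBase k C K X

/-- Two sets coincide near a subspace `X`. -/
def CoincideNear {V : Type*} [AddCommGroup V] [Module ℝ V] [TopologicalSpace V]
    (B₁ B₂ : Set V) (X : Submodule ℝ V) : Prop :=
  ∃ U : Set V, IsOpen U ∧ (X : Set V) ⊆ U ∧ B₁ ∩ U = B₂ ∩ U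

/-- `B` is locally cylindrical near `X`. -/
def IsLocallyCylindricalNear {V : Type*} [AddCommGroup V] [Module ℝ V] [TopologicalSpace V]
    (k : ℕ) (B : Set V) (X : Submodule ℝ V) : Prop :=
  ∃ C : Set V, IsCylinder k C ∧ CoincideNear B C X

/-- A Minkowski seminorm: nonnegative, positively 1-homogeneous and subadditive. -/
def IsMinkowskiSeminorm {V : Type*} [AddCommGroup V] [Module ℝ V] (Φ : V → ℝ) : Prop :=
  (∀ v, 0 ≤ Φ v) ∧ (∀ (c : ℝ) (v : V), 0 ≤ c → Φ (c • v) = c * Φ v) ∧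
    ∀ v w, Φ (v + w) ≤ Φ v + Φ w

/-- A Minkowski norm: a Minkowski seminorm positive outside the origin. -/
def IsMinkowskiNorm {V : Type*} [AddCommGroup V] [Module ℝ V] (Φ : V → ℝ) : Prop :=
  IsMinkowskiSeminorm Φ ∧ ∀ v : V, v ≠ 0 → 0 < Φ v

/-- `X` is `Φ`-contracting with contracting direction `Y`. -/
def IsContractingWithDirection {V : Type*} [AddCommGroup V] [Module ℝ V]
    (Φ : V → ℝ) (X Y : Submodule ℝ V) : Prop :=
  ∃ h : IsCompl X Y, ∀ v : V, Φ (X.linearProjOfIsCompl Y h v : V) ≤ Φ v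

/-- `X` is `Φ`-contracting: there is a linear projector of `V` onto `X`
that does not increase `Φ`. -/
def IsContracting {V : Type*} [AddCommGroup V] [Module ℝ V]
    (Φ : V → ℝ) (X : Submodule ℝ V) : Prop :=
  ∃ P : V →ₗ[ℝ] V, P ∘ₗ P = P ∧ LinearMap.range P = X ∧ ∀ v, Φ (P v) ≤ Φ v

/-- `K` is a 0-centered ellipsoid in the subspace `X`: the unit ball of an
inner product norm on `X`. -/
def IsEllipsoidIn {V : Type*} [AddCommGroup V] [Module ℝ V]
    (X : Submodule ℝ V) (K : Set V) : Prop :=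
  ∃ Q : QuadraticForm ℝ X, Q.PosDef ∧ K = (↑) '' {x : X | Q x ≤ 1}

/-- **Locality of the Kakutani condition.** If convex sets `B₁, B₂` (with `0` interior)
coincide near `X` and `B₁` is contained in a `k`-cylinder `C` with base `B₁ ∩ X`,
then `B₂ ⊆ C` as well. -/
theorem locality_of_kakutani_condition
    {V : Type*} [NormedAddCommGroup V] [NormedSpace ℝ V] [FiniteDimensional ℝ V]
    (n k : ℕ) (hn : Module.finrank ℝ V = n)
    (X : Submodule ℝ V) (hX : Module.finrank ℝ X = k)
    (B₁ B₂ : Set V) (hB₁ : Convex ℝ B₁) (hB₂ : Convex ℝ B₂)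
    (h0₁ : 0 ∈ interior B₁) (h0₂ : 0 ∈ interior B₂)
    (hnear : CoincideNear B₁ B₂ X)
    (C : Set V) (hC : IsCylinderWithBase k C (B₁ ∩ (X : Set V)) X)
    (hB₁C : B₁ ⊆ C) :
    B₂ ⊆ C := by
  intro b hb
  obtain ⟨hfr, hKX, hKcomp, hKconv, hKint, Y, hcompl, hCeq⟩ := hC
  obtain ⟨U, hU, hXU, hUeq⟩ := hnear
  set K : Set V := B₁ ∩ (X : Set V) with hK
  set P := X.linearProjOfIsCompl Y hcompl with hP
  set qb : V := (P b : V) with hqb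
  have hqbX : qb ∈ X := (P b).2
  clear_value qb
  have h0B₁ : (0 : V) ∈ B₁ := interior_subset h0₁
  have h0K : (0 : V) ∈ K := ⟨h0B₁, X.zero_mem⟩
  -- projection of a point of C lies in K
  have hprojC : ∀ v ∈ C, ((P v : V)) ∈ K := by
    intro v hv
    rw [hCeq] at hv
    obtain ⟨x, hx, y, hy, rfl⟩ := Set.mem_add.mp hv
    have hxX : x ∈ X := hKX hx
    have : P (x + y) = ⟨x, hxX⟩ := by
      rw [map_add, hP]
      rw [show X.linearProjOfIsCompl Y hcompl = X.projectionOnto Y hcompl from rfl,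
        Submodule.projectionOnto_apply_of_mem_right hcompl hy]
      have := Submodule.linearProjOfIsCompl_apply_left hcompl (⟨x, hxX⟩ : X)
      simp only [Submodule.coe_subtype] at this
      simpa using this
    rw [this]
    exact hx
  set T : Set ℝ := {t | t ∈ Set.Icc (0:ℝ) 1 ∧ t • qb ∈ K} with hT
  have hT0 : (0:ℝ) ∈ T := ⟨⟨le_refl 0, zero_le_one⟩, by simpa using h0K⟩
  have hTbdd : BddAbove T := ⟨1, fun t ht => ht.1.2⟩
  have hTclosed : IsClosed T := by
    have : T = Set.Icc (0:ℝ) 1 ∩ ((fun t : ℝ => t • qb) ⁻¹' K) := rfl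
    rw [this]
    exact isClosed_Icc.inter (hKcomp.isClosed.preimage (continuous_id.smul continuous_const))
  set t₀ : ℝ := sSup T with ht₀
  clear_value t₀
  have ht₀T : t₀ ∈ T := ht₀ ▸ hTclosed.csSup_mem ⟨0, hT0⟩ hTbdd
  have ht₀1 : t₀ ≤ 1 := ht₀T.1.2
  have ht₀0 : 0 ≤ t₀ := ht₀T.1.1
  have hmain : t₀ = 1 := by
    by_contra hne
    have ht₀lt : t₀ < 1 := lt_of_le_of_ne ht₀1 hne
    set p : V := t₀ • qb with hp
    clear_value p
    have hpK : p ∈ K := hp ▸ ht₀T.2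
    have hpX : p ∈ X := hp ▸ X.smul_mem t₀ hqbX
    have hpU : p ∈ U := hXU hpX
    have hpB₂ : p ∈ B₂ := by
      have : p ∈ B₂ ∩ U := hUeq ▸ ⟨hpK.1, hpU⟩
      exact this.1
    -- choose small δ with (1-δ)•p + δ•b ∈ U
    have hcont : Continuous (fun δ : ℝ => (1 - δ) • p + δ • b) :=
      ((continuous_const.sub continuous_id).smul continuous_const).add
        (continuous_id.smul continuous_const)
    have h0mem : (fun δ : ℝ => (1 - δ) • p + δ • b) 0 ∈ U := by simpa using hpU
    have hopen : IsOpen ((fun δ : ℝ => (1 - δ) • p + δ • b) ⁻¹' U) := hU.preimage hcont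
    obtain ⟨ε, hε, hball⟩ := Metric.isOpen_iff.mp hopen 0 h0mem
    set δ : ℝ := min (ε / 2) (1 / 2) with hδ
    have hδ0 : 0 < δ := lt_min (by linarith) (by norm_num)
    have hδ1 : δ ≤ 1 / 2 := min_le_right _ _
    have hδε : δ < ε := lt_of_le_of_lt (min_le_left _ _) (by linarith)
    clear_value δ
    have hwU : (1 - δ) • p + δ • b ∈ U := by
      apply hball
      simp [Real.dist_eq, abs_of_pos hδ0, hδε]
    have hwB₂ : (1 - δ) • p + δ • b ∈ B₂ :=
      hB₂ hpB₂ hb (by linarith) (le_of_lt hδ0) (by ring)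
    have hwB₁ : (1 - δ) • p + δ • b ∈ B₁ := by
      have : (1 - δ) • p + δ • b ∈ B₁ ∩ U := hUeq ▸ ⟨hwB₂, hwU⟩
      exact this.1
    have hwC : (1 - δ) • p + δ • b ∈ C := hB₁C hwB₁
    have hprojw : ((P ((1 - δ) • p + δ • b) : V)) ∈ K := hprojC _ hwC
    have hPp : (P p : V) = p := by
      have := Submodule.linearProjOfIsCompl_apply_left hcompl (⟨p, hpX⟩ : X)
      rw [hP]
      exact congrArg Subtype.val this
    have hPw : ((P ((1 - δ) • p + δ • b) : V)) = ((1 - δ) * t₀ + δ) • qb := by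
      have h1 : P ((1 - δ) • p + δ • b) = (1 - δ) • P p + δ • P b := by
        rw [map_add, map_smul, map_smul]
      rw [h1]
      push_cast
      rw [hPp, ← hqb, hp, smul_smul, add_smul]
    have ht' : ((1 - δ) * t₀ + δ) ∈ T := by
      rw [hT]
      have e1 : (0:ℝ) ≤ (1 - δ) * t₀ := mul_nonneg (by linarith) ht₀0
      have e2 : (1 - δ) * t₀ ≤ (1 - δ) * 1 := by
        apply mul_le_mul_of_nonneg_left ht₀1; linarith
      refine ⟨⟨by linarith, by linarith⟩, ?_⟩
      rw [← hPw]; exact hprojw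
    have hle : (1 - δ) * t₀ + δ ≤ t₀ := by
      have := le_csSup hTbdd ht'
      rwa [← ht₀] at this
    have e3 : (0:ℝ) < δ * (1 - t₀) := mul_pos hδ0 (by linarith)
    have e4 : δ * (1 - t₀) = (1 - δ) * t₀ + δ - t₀ := by ring
    linarith
  have hqbK : qb ∈ K := by
    have := ht₀T.2
    rw [hmain, one_smul] at this
    exact this
  have hbY : b - qb ∈ Y := by
    have h := Submodule.projection_add_projection_eq_self hcompl b
    have : b - qb = (Y.linearProjOfIsCompl X hcompl.symm b : V) := by
      rw [hqb, hP, eq_comm, eq_sub_iff_add_eq, add_comm]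
      exact h
    rw [this]
    exact (Y.linearProjOfIsCompl X hcompl.symm b).2
  rw [hCeq]
  exact Set.mem_add.mpr ⟨qb, hqbK, b - qb, hbY, by abel⟩
end

section
/- Let V be an n-dimensional real vector space, B ⊂ V a convex body with 0 in its interior, and X a k-dimensional linear subspace of V (1 ≤ k < n). Assume that at least one of the following holds: (1) B is locally cylindrical near X; (2) B coincides near X with B' = {v ∈ V : Q(v) ≤ 1} for some nonnegative definite quadratic form Q on V. Then B is contained in a k-cylinder with base B ∩ X. -/
open Module Set Pointwise

section MyAux

variable {V : Type*} [NormedAddCommGroup V] [NormedSpace ℝ V]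

/-- Unbounded ray inside a compact set is impossible. -/
lemma my_line_bdd {B : Set V} (hB : IsCompact B) {v : V} (hv : v ≠ 0)
    (h : ∀ t : ℝ, 0 ≤ t → t • v ∈ B) : False := by
  obtain ⟨R, hR⟩ := isBounded_iff_forall_norm_le.1 hB.isBounded
  have hv0 : 0 < ‖v‖ := norm_pos_iff.2 hv
  set t : ℝ := (|R| + 1) / ‖v‖ with ht
  have ht0 : 0 ≤ t := by positivity
  have := hR _ (h t ht0)
  rw [norm_smul, Real.norm_eq_abs, abs_of_nonneg ht0, ht, div_mul_cancel₀ _ hv0.ne'] at this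
  have : R ≤ |R| := le_abs_self R
  linarith [le_abs_self R, hR _ (h t ht0)]

lemma my_compl_of_disjoint [FiniteDimensional ℝ V] {X Y : Submodule ℝ V} (hd : Disjoint X Y)
    (hfr : finrank ℝ V ≤ finrank ℝ X + finrank ℝ Y) : IsCompl X Y := by
  have h1 := Submodule.finrank_sup_add_finrank_inf_eq X Y
  rw [disjoint_iff.1 hd, finrank_bot] at h1
  have hle := Submodule.finrank_le (X ⊔ Y)
  have htop : finrank ℝ ↥(X ⊔ Y) = finrank ℝ V := le_antisymm hle (by omega)
  exact ⟨hd, codisjoint_iff.2 (Submodule.eq_top_of_finrank_eq htop)⟩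

/-- Key local-to-global step. -/
lemma my_key_mem {B C' U : Set V} {X Y : Submodule ℝ V}
    (hBconv : Convex ℝ B) (hBclosed : IsClosed B) (h0B : (0:V) ∈ B)
    (hU : IsOpen U) (hXU : (X : Set V) ⊆ U) (hBC : B ∩ U = C' ∩ U)
    (hproj : ∀ x' y' : V, x' ∈ X → y' ∈ Y → x' + y' ∈ C' → x' ∈ C')
    {b x y : V} (hb : b ∈ B) (hx : x ∈ X) (hy : y ∈ Y) (hbxy : b = x + y) :
    x ∈ B := by
  set S : Set ℝ := Set.Icc (0:ℝ) 1 ∩ {t : ℝ | t • x ∈ B} with hSdef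
  have hS0 : (0:ℝ) ∈ S := ⟨⟨le_refl _, zero_le_one⟩, by simpa using h0B⟩
  have hSc : IsClosed S :=
    isClosed_Icc.inter (hBclosed.preimage (continuous_id.smul continuous_const))
  have hSb : BddAbove S := ⟨1, fun t ht => ht.1.2⟩
  have htS : sSup S ∈ S := hSc.csSup_mem ⟨0, hS0⟩ hSb
  set t₀ := sSup S with ht₀def
  by_cases h1 : t₀ = 1
  · have h2 := htS.2
    rw [h1] at h2
    simpa using h2
  have h1' : t₀ < 1 := lt_of_le_of_ne htS.1.2 h1
  have ht00 : 0 ≤ t₀ := htS.1.1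
  exfalso
  have hpB : t₀ • x ∈ B := htS.2
  have hpX : t₀ • x ∈ X := X.smul_mem _ hx
  have hco : Continuous fun l : ℝ => t₀ • x + l • (b - t₀ • x) :=
    continuous_const.add (continuous_id.smul continuous_const)
  have hUopen : IsOpen ((fun l : ℝ => t₀ • x + l • (b - t₀ • x)) ⁻¹' U) := hU.preimage hco
  have h0pre : (0:ℝ) ∈ ((fun l : ℝ => t₀ • x + l • (b - t₀ • x)) ⁻¹' U) := by
    simpa using hXU hpX
  obtain ⟨ε, hε, hball⟩ := Metric.isOpen_iff.1 hUopen 0 h0pre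
  set l : ℝ := min (ε/2) 1 with hldef
  have hl0 : 0 < l := lt_min (by linarith) one_pos
  have hl1 : l ≤ 1 := min_le_right _ _
  have hlball : l ∈ Metric.ball (0:ℝ) ε := by
    rw [Metric.mem_ball, Real.dist_eq, sub_zero, abs_of_pos hl0]
    calc l ≤ ε / 2 := min_le_left _ _
      _ < ε := by linarith
  have hlU : t₀ • x + l • (b - t₀ • x) ∈ U := hball hlball
  have hqeq : t₀ • x + l • (b - t₀ • x) = (1 - l) • (t₀ • x) + l • b := by module
  have hqB : t₀ • x + l • (b - t₀ • x) ∈ B := by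
    rw [hqeq]
    exact hBconv hpB hb (by linarith) hl0.le (by ring)
  have hqC : t₀ • x + l • (b - t₀ • x) ∈ C' := by
    have hmem : t₀ • x + l • (b - t₀ • x) ∈ B ∩ U := ⟨hqB, hlU⟩
    rw [hBC] at hmem
    exact hmem.1
  set t₁ : ℝ := (1 - l) * t₀ + l with ht₁def
  have hqdec : t₀ • x + l • (b - t₀ • x) = t₁ • x + l • y := by
    rw [hbxy, ht₁def]; module
  rw [hqdec] at hqC
  have ht₁C : t₁ • x ∈ C' := hproj _ _ (X.smul_mem _ hx) (Y.smul_mem _ hy) hqC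
  have ht₁B : t₁ • x ∈ B := by
    have hmem : t₁ • x ∈ C' ∩ U := ⟨ht₁C, hXU (X.smul_mem _ hx)⟩
    rw [← hBC] at hmem
    exact hmem.1
  have ht₁S : t₁ ∈ S := ⟨⟨by nlinarith, by nlinarith⟩, ht₁B⟩
  have hle := le_csSup hSb ht₁S
  nlinarith

end MyAux

/-- **The local Kakutani condition is necessary.** If `B` is locally cylindrical near `X`,
or coincides near `X` with a sublevel set of a nonnegative definite quadratic form,
then `B` is contained in a `k`-cylinder with base `B ∩ X`. -/


theorem local_kakutani_iff_converse
    {V : Type*} [NormedAddCommGroup V] [NormedSpace ℝ V] [FiniteDimensional ℝ V]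
    (n k : ℕ) (hn : Module.finrank ℝ V = n) (hk : 1 ≤ k) (hkn : k < n)
    (B : Set V) (hB : IsConvexBody B) (h0 : 0 ∈ interior B)
    (X : Submodule ℝ V) (hX : Module.finrank ℝ X = k)
    (h : IsLocallyCylindricalNear k B X ∨
      ∃ Q : QuadraticForm ℝ V, (∀ v, 0 ≤ Q v) ∧ CoincideNear B {v | Q v ≤ 1} X) :
    ∃ C : Set V, IsCylinderWithBase k C (B ∩ (X : Set V)) X ∧ B ⊆ C := by
  obtain ⟨hBcomp, hBconv, hBint⟩ := hB
  have hBclosed : IsClosed B := hBcomp.isClosed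
  have h0B : (0:V) ∈ B := interior_subset h0
  suffices h' : ∃ (Y : Submodule ℝ V) (U C' : Set V), IsCompl X Y ∧ IsOpen U ∧
      (X : Set V) ⊆ U ∧ B ∩ U = C' ∩ U ∧
      (∀ x' y' : V, x' ∈ X → y' ∈ Y → x' + y' ∈ C' → x' ∈ C') by
    obtain ⟨Y, U, C', hc, hU, hXU, hBC, hproj⟩ := h'
    refine ⟨(B ∩ (X : Set V)) + (Y : Set V), ⟨hX, inter_subset_right,
      hBcomp.inter_right X.closed_of_finiteDimensional, hBconv.inter X.convex, ?_, Y, hc, rfl⟩,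
      ?_⟩
    · -- nonempty relative interior
      have hcont : Continuous ((↑) : X → V) := continuous_subtype_val
      have hop : IsOpen ((↑) ⁻¹' interior B : Set X) := isOpen_interior.preimage hcont
      have hsub : ((↑) ⁻¹' interior B : Set X) ⊆ (↑) ⁻¹' (B ∩ (X : Set V)) :=
        fun z hz => ⟨interior_subset hz, z.2⟩
      refine ⟨0, interior_maximal hsub hop ?_⟩
      show ((0:X) : V) ∈ interior B
      simpa using h0
    · intro b hb
      obtain ⟨x, y, hx, hy, hxy⟩ := Submodule.codisjoint_iff_exists_add_eq.mp hc.codisjoint b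
      have hxB : x ∈ B := my_key_mem hBconv hBclosed h0B hU hXU hBC hproj hb hx hy hxy.symm
      exact Set.mem_add.2 ⟨x, ⟨hxB, hx⟩, y, hy, hxy⟩
  rcases h with ⟨C₀, ⟨K₀, X₀, hfr₀, _hK₀X₀, _hK₀c, _hK₀conv, _hK₀int, Y₀, hcpl₀, hC₀⟩,
      U, hU, hXU, hBC⟩ | ⟨Q, hQ0, U, hU, hXU, hBC⟩
  · -- cylinder case
    have h0U : (0:V) ∈ U := hXU X.zero_mem
    have h0C₀ : (0:V) ∈ C₀ := by
      have : (0:V) ∈ B ∩ U := ⟨h0B, h0U⟩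
      rw [hBC] at this; exact this.1
    obtain ⟨k₀, hk₀, y₀, hy₀, hsum⟩ := Set.mem_add.1 (hC₀ ▸ h0C₀)
    have hY₀C₀ : (Y₀ : Set V) ⊆ C₀ := by
      intro z hz
      rw [hC₀]
      exact Set.mem_add.2 ⟨k₀, hk₀, y₀ + z, Y₀.add_mem hy₀ hz, by rw [← add_assoc, hsum, zero_add]⟩
    have hdisj : Disjoint X Y₀ := by
      rw [Submodule.disjoint_def]
      intro v hvX hvY
      by_contra hv0
      refine my_line_bdd hBcomp hv0 (fun t ht => ?_)
      have h1 : t • v ∈ C₀ := hY₀C₀ (Y₀.smul_mem t hvY)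
      have h2 : t • v ∈ U := hXU (X.smul_mem t hvX)
      have : t • v ∈ C₀ ∩ U := ⟨h1, h2⟩
      rw [← hBC] at this
      exact this.1
    have hfrY₀ : finrank ℝ X₀ + finrank ℝ Y₀ = finrank ℝ V :=
      Submodule.finrank_add_eq_of_isCompl hcpl₀
    have hc : IsCompl X Y₀ := my_compl_of_disjoint hdisj (by omega)
    refine ⟨Y₀, U, C₀, hc, hU, hXU, hBC, ?_⟩
    intro x' y' _hx' hy' hmem
    rw [hC₀] at hmem ⊢
    obtain ⟨kk, hkk, w, hw, hsum'⟩ := Set.mem_add.1 hmem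
    exact Set.mem_add.2 ⟨kk, hkk, w - y', Y₀.sub_mem hw hy', by
      have : kk + (w - y') = (kk + w) - y' := by abel
      rw [this, hsum']; abel⟩
  · -- quadratic case
    set C' : Set V := {v | Q v ≤ 1} with hC'def
    have hposdefX : ∀ v ∈ X, Q v = 0 → v = 0 := by
      intro v hvX hQv
      by_contra hv0
      refine my_line_bdd hBcomp hv0 (fun t ht => ?_)
      have h1 : t • v ∈ C' := by
        show Q (t • v) ≤ 1
        rw [QuadraticMap.map_smul, hQv, smul_eq_mul, mul_zero]
        norm_num
      have h2 : t • v ∈ U := hXU (X.smul_mem t hvX)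
      have : t • v ∈ C' ∩ U := ⟨h1, h2⟩
      rw [← hBC] at this
      exact this.1
    have hpolar : ∀ v w : V, Q (v + w) = Q v + Q w + QuadraticMap.polar Q v w := by
      intro v w
      simp [QuadraticMap.polar]
    have hpolarcomm : ∀ v w : V, QuadraticMap.polar (⇑Q) v w = QuadraticMap.polar (⇑Q) w v := by
      intro v w
      simp only [QuadraticMap.polar, add_comm]
      ring
    set f : V →ₗ[ℝ] Module.Dual ℝ X := X.subtype.dualMap ∘ₗ Q.polarBilin with hfdef
    set Y : Submodule ℝ V := LinearMap.ker f with hYdef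
    have hYmem : ∀ v : V, v ∈ Y ↔ ∀ x : X, QuadraticMap.polar (⇑Q) v (x : V) = 0 := by
      intro v
      rw [hYdef, LinearMap.mem_ker, hfdef]
      constructor
      · intro hv x
        have := LinearMap.ext_iff.1 hv x
        simpa [LinearMap.dualMap_apply, QuadraticMap.polarBilin_apply_apply] using this
      · intro hv
        ext x
        simpa [LinearMap.dualMap_apply, QuadraticMap.polarBilin_apply_apply] using hv x
    have hdisj : Disjoint X Y := by
      rw [Submodule.disjoint_def]
      intro v hvX hvY
      have h1 : QuadraticMap.polar (⇑Q) v v = 0 := (hYmem v).1 hvY ⟨v, hvX⟩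
      have h2 : Q (v + v) = Q v + Q v + QuadraticMap.polar (⇑Q) v v := hpolar v v
      have h3 : Q (v + v) = 4 * Q v := by
        have : v + v = (2:ℝ) • v := (two_smul ℝ v).symm
        rw [this, QuadraticMap.map_smul, smul_eq_mul]
        ring
      have hQv : Q v = 0 := by
        rw [h1, h3] at h2
        linarith
      exact hposdefX v hvX hQv
    have hfrY : finrank ℝ V ≤ finrank ℝ X + finrank ℝ Y := by
      have h1 := LinearMap.finrank_range_add_finrank_ker f
      have h2 : finrank ℝ ↥(LinearMap.range f) ≤ finrank ℝ (Module.Dual ℝ X) :=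
        Submodule.finrank_le _
      have h3 : finrank ℝ (Module.Dual ℝ X) = finrank ℝ X := Subspace.dual_finrank_eq
      have h4 : finrank ℝ Y = finrank ℝ (LinearMap.ker f) := rfl
      omega
    have hc : IsCompl X Y := my_compl_of_disjoint hdisj hfrY
    refine ⟨Y, U, C', hc, hU, hXU, hBC, ?_⟩
    intro x' y' hx' hy' hmem
    have hpol : QuadraticMap.polar (⇑Q) x' y' = 0 := by
      rw [hpolarcomm]
      exact (hYmem y').1 hy' ⟨x', hx'⟩
    have hexp : Q (x' + y') = Q x' + Q y' + QuadraticMap.polar (⇑Q) x' y' := hpolar x' y'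
    have hQy' : 0 ≤ Q y' := hQ0 y'
    have : Q (x' + y') ≤ 1 := hmem
    show Q x' ≤ 1
    rw [hexp, hpol] at this
    linarith
end

section
/- Let Φ be a Minkowski norm on an n-dimensional real vector space V, 2 ≤ k < n an integer, and 𝒰 ⊂ Gr_k V a nonempty connected open set. Suppose that for every X ∈ 𝒰 the restriction Φ|_X is an inner product norm on X. Then there exists a unique quadratic form Q on V such that (Φ|_X)² = Q|_X for all X ∈ 𝒰; moreover, Q is nonnegative definite. -/
open Module Set Pointwise

namespace EllipsoidProof

/-! ### Generic small lemmas -/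

theorem poly2_aux {a b c δ : ℝ} (hδ : 0 < δ)
    (h : ∀ t : ℝ, |t| < δ → a + b * t + c * t ^ 2 = 0) :
    a = 0 ∧ b = 0 ∧ c = 0 := by
  have h0 := h 0 (by simpa using hδ)
  have h1 := h (δ / 2) (by rw [abs_of_pos (by linarith)]; linarith)
  have h2 := h (-(δ / 2)) (by rw [abs_of_neg (by linarith)]; linarith)
  have hδ2 : δ / 2 ≠ 0 := by positivity
  refine ⟨by linarith, ?_, ?_⟩
  · have : b * (δ / 2) = 0 := by nlinarith [h1, h2]
    rcases mul_eq_zero.mp this with h | h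
    · exact h
    · exact absurd h hδ2
  · have : c * (δ / 2) ^ 2 = 0 := by nlinarith [h1, h2]
    rcases mul_eq_zero.mp this with h | h
    · exact h
    · exact absurd h (pow_ne_zero 2 hδ2)

section VSpace

variable {V : Type*} [NormedAddCommGroup V] [NormedSpace ℝ V]

theorem nsh (x d e₀ : V) : ‖x + d - e₀‖ ≤ ‖x - e₀‖ + ‖d‖ := by
  calc ‖x + d - e₀‖ = ‖(x - e₀) + d‖ := by rw [add_sub_right_comm]
    _ ≤ ‖x - e₀‖ + ‖d‖ := norm_add_le _ _

/-- Quadratic behaviour of `f` on a plane `Z`. -/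
def PlaneOK (f : V → ℝ) (Z : Submodule ℝ V) : Prop :=
  ∀ u v : V, u ∈ Z → v ∈ Z → ∀ a b : ℝ,
    f (a • u + b • v) = a ^ 2 * f u + b ^ 2 * f v + a * b * (f (u + v) - f u - f v)

theorem planeOK_of_sqrt {Φ : V → ℝ} {Z : Submodule ℝ V} (q : QuadraticForm ℝ Z)
    (hq : q.PosDef) (h : ∀ x : Z, Φ x = Real.sqrt (q x)) :
    PlaneOK (fun v => (Φ v) ^ 2) Z := by
  have key : ∀ x : Z, (Φ (x : V)) ^ 2 = q x := by
    intro x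
    rw [h x, Real.sq_sqrt (hq.nonneg x)]
  intro u v hu hv a b
  have hq1 : ∀ x y : Z, q (x + y) = q x + q y + QuadraticMap.polar q x y := by
    intro x y; simp [QuadraticMap.polar]; try ring
  have e1 : (Φ (a • u + b • v)) ^ 2 = q (a • (⟨u, hu⟩ : Z) + b • ⟨v, hv⟩) := by
    have := key (a • (⟨u, hu⟩ : Z) + b • ⟨v, hv⟩)
    simpa using this
  have e2 : q (a • (⟨u, hu⟩ : Z) + b • (⟨v, hv⟩ : Z))
      = a ^ 2 * q ⟨u, hu⟩ + b ^ 2 * q ⟨v, hv⟩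
        + a * b * QuadraticMap.polar q ⟨u, hu⟩ ⟨v, hv⟩ := by
    rw [hq1, QuadraticMap.map_smul, QuadraticMap.map_smul,
      QuadraticMap.polar_smul_left, QuadraticMap.polar_smul_right]
    simp [smul_eq_mul]; ring
  have e3 : QuadraticMap.polar q ⟨u, hu⟩ ⟨v, hv⟩
      = (Φ (u + v)) ^ 2 - (Φ u) ^ 2 - (Φ v) ^ 2 := by
    have h1 := key (⟨u, hu⟩ + ⟨v, hv⟩)
    have h2 := key ⟨u, hu⟩
    have h3 := key ⟨v, hv⟩
    simp only [QuadraticMap.polar]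
    rw [← h1, ← h2, ← h3]
    rfl
  simp only []
  rw [e1, e2, e3, ← key ⟨u, hu⟩, ← key ⟨v, hv⟩]

theorem quadratic_eq_on_ball {Q₁ Q₂ : QuadraticForm ℝ V} {x₀ : V} {r : ℝ} (hr : 0 < r)
    (h : ∀ w : V, ‖w - x₀‖ < r → Q₁ w = Q₂ w) : Q₁ = Q₂ := by
  have expand : ∀ (Q : QuadraticForm ℝ V) (t : ℝ) (v : V),
      Q (x₀ + t • v) = Q x₀ + (QuadraticMap.polar Q x₀ v) * t + Q v * t ^ 2 := by
    intro Q t v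
    have h1 : Q (x₀ + t • v) = Q x₀ + Q (t • v) + QuadraticMap.polar Q x₀ (t • v) := by
      simp [QuadraticMap.polar]; try ring
    rw [h1, QuadraticMap.map_smul, QuadraticMap.polar_smul_right]
    simp [smul_eq_mul]; ring
  ext v
  have hδ : 0 < r / (‖v‖ + 1) := by positivity
  have key : ∀ t : ℝ, |t| < r / (‖v‖ + 1) →
      (Q₁ x₀ - Q₂ x₀) + (QuadraticMap.polar Q₁ x₀ v - QuadraticMap.polar Q₂ x₀ v) * t
        + (Q₁ v - Q₂ v) * t ^ 2 = 0 := by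
    intro t ht
    have hmem : ‖x₀ + t • v - x₀‖ < r := by
      simp only [add_sub_cancel_left, norm_smul, Real.norm_eq_abs]
      calc |t| * ‖v‖ ≤ |t| * (‖v‖ + 1) := by
            apply mul_le_mul_of_nonneg_left (by linarith) (abs_nonneg t)
        _ < r / (‖v‖ + 1) * (‖v‖ + 1) := by
            apply mul_lt_mul_of_pos_right ht (by positivity)
        _ = r := by field_simp
    have := h _ hmem
    rw [expand Q₁, expand Q₂] at this
    linarith
  obtain ⟨h1, h2, h3⟩ := poly2_aux hδ key
  linarith

theorem PlaneOK.global {f : V → ℝ} {Z : Submodule ℝ V} (hZ : PlaneOK f Z)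
    (Q : QuadraticForm ℝ V) {x₀ : V} {r : ℝ}
    (hball : ∀ w : V, ‖w - x₀‖ < r → f w = Q w)
    {u₁ : V} (hu₁Z : u₁ ∈ Z) (hu₁ : ‖u₁ - x₀‖ < r) :
    ∀ z ∈ Z, f z = Q z := by
  intro z hz
  set v := z - u₁ with hv
  have hvZ : v ∈ Z := Z.sub_mem hz hu₁Z
  have hδ : 0 < (r - ‖u₁ - x₀‖) / (‖v‖ + 1) := by
    have : 0 < r - ‖u₁ - x₀‖ := by linarith
    positivity
  have expandf : ∀ t : ℝ, f (u₁ + t • v)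
      = f u₁ + (f z - f u₁ - f v) * t + f v * t ^ 2 := by
    intro t
    have := hZ u₁ v hu₁Z hvZ 1 t
    simp only [one_smul, one_pow, one_mul] at this
    rw [this]
    have : u₁ + v = z := by simp [hv]
    rw [this]; ring
  have expandQ : ∀ t : ℝ, Q (u₁ + t • v)
      = Q u₁ + (QuadraticMap.polar Q u₁ v) * t + Q v * t ^ 2 := by
    intro t
    have h1 : Q (u₁ + t • v) = Q u₁ + Q (t • v) + QuadraticMap.polar Q u₁ (t • v) := by
      simp [QuadraticMap.polar]; try ring
    rw [h1, QuadraticMap.map_smul, QuadraticMap.polar_smul_right]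
    simp [smul_eq_mul]; ring
  have key : ∀ t : ℝ, |t| < (r - ‖u₁ - x₀‖) / (‖v‖ + 1) →
      (f u₁ - Q u₁) + ((f z - f u₁ - f v) - QuadraticMap.polar Q u₁ v) * t
        + (f v - Q v) * t ^ 2 = 0 := by
    intro t ht
    have hmem : ‖u₁ + t • v - x₀‖ < r := by
      have h2 : ‖t • v‖ < r - ‖u₁ - x₀‖ := by
        rw [norm_smul, Real.norm_eq_abs]
        calc |t| * ‖v‖ ≤ |t| * (‖v‖ + 1) := by
              apply mul_le_mul_of_nonneg_left (by linarith) (abs_nonneg t)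
          _ < (r - ‖u₁ - x₀‖) / (‖v‖ + 1) * (‖v‖ + 1) := by
              apply mul_lt_mul_of_pos_right ht (by positivity)
          _ = r - ‖u₁ - x₀‖ := by field_simp
      calc ‖u₁ + t • v - x₀‖ ≤ ‖u₁ - x₀‖ + ‖t • v‖ := nsh _ _ _
        _ < r := by linarith
    have := hball _ hmem
    rw [expandf, expandQ] at this
    linarith
  obtain ⟨h1, h2, h3⟩ := poly2_aux hδ key
  have hQz : Q z = Q u₁ + Q v + QuadraticMap.polar Q u₁ v := by
    have huv : u₁ + v = z := by simp [hv]
    rw [← huv]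
    simp [QuadraticMap.polar]
  linarith

/-! ### The analytic core: steps, constants, second differences -/

def Step (e₁ : V) (ε σ : ℝ) (d : V) : Prop := 0 < σ ∧ ‖d - σ • e₁‖ < σ * ε

structure CoreHyp (f : V → ℝ) (e₀ e₁ : V) (ε : ℝ) : Prop where
  hε : 0 < ε
  hom : ∀ t : ℝ, 0 ≤ t → ∀ x : V, f (t • x) = t ^ 2 * f x
  line : ∀ z d : V, ‖z - e₀‖ < ε → ∀ σ : ℝ, Step e₁ ε σ d →
    ∀ t : ℝ, f (z + t • d) = f z + t * (f (z + d) - f z - f d) + t ^ 2 * f d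

variable {f : V → ℝ} {e₀ e₁ : V} {ε : ℝ}

noncomputable def EE (e₁ : V) (ε : ℝ) : ℝ := ‖e₁‖ + ε
noncomputable def rho (e₁ : V) (ε : ℝ) : ℝ := ε / (100 * (EE e₁ ε + 1))

theorem EE_pos (hε : 0 < ε) : 0 < EE e₁ ε := by
  have := norm_nonneg e₁; unfold EE; linarith
theorem rho_pos (hε : 0 < ε) : 0 < rho e₁ ε := by
  have := EE_pos (e₁ := e₁) hε; unfold rho; positivity
theorem rho_mul_EE (hε : 0 < ε) : rho e₁ ε * EE e₁ ε ≤ ε / 100 := by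
  have hE := EE_pos (e₁ := e₁) hε
  rw [rho, div_mul_eq_mul_div, div_le_div_iff₀ (by positivity) (by norm_num)]
  nlinarith
theorem rho_mul_eps (hε : 0 < ε) : rho e₁ ε * ε ≤ ε / 100 := by
  have hE := EE_pos (e₁ := e₁) hε
  have hEe : ε ≤ EE e₁ ε := by unfold EE; linarith [norm_nonneg e₁]
  rw [rho, div_mul_eq_mul_div, div_le_div_iff₀ (by positivity) (by norm_num)]
  nlinarith

theorem Step.norm_le {σ : ℝ} {d : V} (h : Step e₁ ε σ d) :
    ‖d‖ ≤ σ * EE e₁ ε := by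
  obtain ⟨hσ, hd⟩ := h
  have h1 : ‖d‖ ≤ ‖d - σ • e₁‖ + ‖σ • e₁‖ := by
    calc ‖d‖ = ‖(d - σ • e₁) + σ • e₁‖ := by rw [sub_add_cancel]
      _ ≤ _ := norm_add_le _ _
  have h2 : ‖σ • e₁‖ = σ * ‖e₁‖ := by
    rw [norm_smul, Real.norm_eq_abs, abs_of_pos hσ]
  rw [EE]; nlinarith

theorem Step.add {σ σ' : ℝ} {d d' : V} (h : Step e₁ ε σ d) (h' : Step e₁ ε σ' d') :
    Step e₁ ε (σ + σ') (d + d') := by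
  obtain ⟨hσ, hd⟩ := h
  obtain ⟨hσ', hd'⟩ := h'
  refine ⟨by linarith, ?_⟩
  have heq : d + d' - (σ + σ') • e₁ = (d - σ • e₁) + (d' - σ' • e₁) := by
    rw [add_smul]; abel
  rw [heq]
  calc ‖(d - σ • e₁) + (d' - σ' • e₁)‖ ≤ ‖d - σ • e₁‖ + ‖d' - σ' • e₁‖ := norm_add_le _ _
    _ < σ * ε + σ' * ε := by linarith
    _ = (σ + σ') * ε := by ring

section WithCoreHyp

variable (H : CoreHyp f e₀ e₁ ε)
include H

theorem c1 {z d : V} {σ : ℝ} (hz : ‖z - e₀‖ < ε) (hd : Step e₁ ε σ d) :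
    f (z + d + d) - 2 * f (z + d) + f z = 2 * f d := by
  have l2 := H.line z d hz σ hd 2
  have l1 := H.line z d hz σ hd 1
  rw [show z + (2 : ℝ) • d = z + d + d by rw [two_smul]; abel] at l2
  rw [one_smul] at l1
  nlinarith [l1, l2]

theorem step_small_norm {σ : ℝ} {d : V} (hd : Step e₁ ε σ d) (hσ : σ ≤ rho e₁ ε) :
    ‖d‖ ≤ ε / 100 :=
  calc ‖d‖ ≤ σ * EE e₁ ε := hd.norm_le
    _ ≤ rho e₁ ε * EE e₁ ε := mul_le_mul_of_nonneg_right hσ (EE_pos H.hε).le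
    _ ≤ ε / 100 := rho_mul_EE H.hε

theorem c2 {z a b c : V} {σa σb σc : ℝ} (hz : ‖z - e₀‖ < ε / 2)
    (ha : Step e₁ ε σa a) (hb : Step e₁ ε σb b) (hc : Step e₁ ε σc c)
    (ha' : σa ≤ rho e₁ ε) (hb' : σb ≤ rho e₁ ε) (hc' : σc ≤ rho e₁ ε) :
    f (z + a + b + c) - f (z + a + b) - f (z + a + c) + f (z + a)
      = f (z + b + c) - f (z + b) - f (z + c) + f z := by
  have hna : ‖a‖ ≤ ε / 100 := step_small_norm H ha ha'
  have hnb : ‖b‖ ≤ ε / 100 := step_small_norm H hb hb'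
  have hnc : ‖c‖ ≤ ε / 100 := step_small_norm H hc hc'
  set w := z - c with hw
  have hw0 : ‖w - e₀‖ ≤ ‖z - e₀‖ + ‖c‖ := by
    have heq : w - e₀ = (z - e₀) + -c := by rw [hw]; abel
    rw [heq]
    calc ‖(z - e₀) + -c‖ ≤ ‖z - e₀‖ + ‖-c‖ := norm_add_le _ _
      _ = ‖z - e₀‖ + ‖c‖ := by rw [norm_neg]
  have hwa : ‖w + a - e₀‖ ≤ ‖w - e₀‖ + ‖a‖ := nsh _ _ _
  have hwcc : ‖w + c + c - e₀‖ ≤ ‖w - e₀‖ + ‖c‖ + ‖c‖ := by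
    calc ‖w + c + c - e₀‖ ≤ ‖w + c - e₀‖ + ‖c‖ := nsh _ _ _
      _ ≤ ‖w - e₀‖ + ‖c‖ + ‖c‖ := by linarith [nsh w c e₀]
  have hwacc : ‖w + a + c + c - e₀‖ ≤ ‖w - e₀‖ + ‖a‖ + ‖c‖ + ‖c‖ := by
    calc ‖w + a + c + c - e₀‖ ≤ ‖w + a + c - e₀‖ + ‖c‖ := nsh _ _ _
      _ ≤ ‖w + a - e₀‖ + ‖c‖ + ‖c‖ := by linarith [nsh (w + a) c e₀]
      _ ≤ ‖w - e₀‖ + ‖a‖ + ‖c‖ + ‖c‖ := by linarith [nsh w a e₀]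
  have hε := H.hε
  have S1 := c1 H (z := w) (d := b + c) (by linarith) (hb.add hc)
  have S2 := c1 H (z := w + a) (d := b + c) (by linarith) (hb.add hc)
  have S3 := c1 H (z := w + c + c) (d := b) (by linarith) hb
  have S4 := c1 H (z := w + a + c + c) (d := b) (by linarith) hb
  have S5 := c1 H (z := w) (d := c) (by linarith) hc
  have S6 := c1 H (z := w + a) (d := c) (by linarith) hc
  rw [show w + (b + c) + (b + c) = w + b + b + c + c by abel,
      show w + (b + c) = w + b + c by abel] at S1
  rw [show w + a + (b + c) + (b + c) = w + a + b + b + c + c by abel,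
      show w + a + (b + c) = w + a + b + c by abel] at S2
  rw [show w + c + c + b + b = w + b + b + c + c by abel,
      show w + c + c + b = w + b + c + c by abel] at S3
  rw [show w + a + c + c + b + b = w + a + b + b + c + c by abel,
      show w + a + c + c + b = w + a + b + c + c by abel] at S4
  rw [show z + a + b + c = w + a + b + c + c from by rw [hw]; abel,
      show z + a + b = w + a + b + c from by rw [hw]; abel,
      show z + a + c = w + a + c + c from by rw [hw]; abel,
      show z + a = w + a + c from by rw [hw]; abel,
      show z + b + c = w + b + c + c from by rw [hw]; abel,
      show z + b = w + b + c from by rw [hw]; abel,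
      show z + c = w + c + c from by rw [hw]; abel,
      show z = w + c from by rw [hw]; abel]
  linarith [S1, S2, S3, S4, S5, S6]

theorem c3b {z u b c : V} {σb σc : ℝ} (hz : ‖z - e₀‖ < 2 * ε / 5)
    (hu : ‖u‖ < rho e₁ ε * ε / 8)
    (hb : Step e₁ ε σb b) (hc : Step e₁ ε σc c)
    (hb' : σb ≤ rho e₁ ε) (hc' : σc ≤ rho e₁ ε) :
    f (z + u + b + c) - f (z + u + b) - f (z + u + c) + f (z + u)
      = f (z + b + c) - f (z + b) - f (z + c) + f z := by
  have hε := H.hε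
  have hρ := rho_pos (e₁ := e₁) hε
  have hE := EE_pos (e₁ := e₁) hε
  have hρE := rho_mul_EE (e₁ := e₁) hε
  set a' : V := (rho e₁ ε / 4) • e₁ with ha'def
  have ha' : Step e₁ ε (rho e₁ ε / 4) a' := ⟨by positivity, by simp [ha'def]; positivity⟩
  have ha : Step e₁ ε (rho e₁ ε / 4) (u + a') := by
    refine ⟨by positivity, ?_⟩
    rw [ha'def, add_sub_cancel_right]
    calc ‖u‖ < rho e₁ ε * ε / 8 := hu
      _ < rho e₁ ε / 4 * ε := by nlinarith
  have hna' : ‖a'‖ ≤ rho e₁ ε / 4 * EE e₁ ε := ha'.norm_le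
  have hsmall : rho e₁ ε / 4 * EE e₁ ε ≤ ε / 400 := by nlinarith
  have hba : rho e₁ ε / 4 ≤ rho e₁ ε := by linarith
  have h1 : ‖z - a' - e₀‖ < ε / 2 := by
    have heq : z - a' - e₀ = (z - e₀) + -a' := by abel
    rw [heq]
    calc ‖(z - e₀) + -a'‖ ≤ ‖z - e₀‖ + ‖-a'‖ := norm_add_le _ _
      _ = ‖z - e₀‖ + ‖a'‖ := by rw [norm_neg]
      _ < ε / 2 := by nlinarith
  have e1 := c2 H (z := z - a') (a := u + a') (b := b) (c := c) h1 ha hb hc hba hb' hc'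
  have e2 := c2 H (z := z - a') (a := a') (b := b) (c := c) h1 ha' hb hc hba hb' hc'
  rw [show z - a' + (u + a') + b + c = z + u + b + c by abel,
      show z - a' + (u + a') + b = z + u + b by abel,
      show z - a' + (u + a') + c = z + u + c by abel,
      show z - a' + (u + a') = z + u by abel] at e1
  rw [show z - a' + a' + b + c = z + b + c by abel,
      show z - a' + a' + b = z + b by abel,
      show z - a' + a' + c = z + c by abel,
      show z - a' + a' = z by abel] at e2
  linarith [e1, e2]

theorem c3 {y y' b c : V} {σb σc : ℝ} (hy : ‖y - e₀‖ < ε / 8) (hy' : ‖y' - e₀‖ < ε / 8)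
    (hb : Step e₁ ε σb b) (hc : Step e₁ ε σc c)
    (hb' : σb ≤ rho e₁ ε) (hc' : σc ≤ rho e₁ ε) :
    f (y + b + c) - f (y + b) - f (y + c) + f y
      = f (y' + b + c) - f (y' + b) - f (y' + c) + f y' := by
  have hε := H.hε
  have hρ := rho_pos (e₁ := e₁) hε
  obtain ⟨m, hm⟩ : ∃ m : ℕ, (2 / rho e₁ ε) < (m : ℝ) := exists_nat_gt _
  have hm0 : 0 < (m : ℝ) := lt_trans (by positivity) hm
  have hmnat : m ≠ 0 := by exact_mod_cast hm0.ne'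
  set w : V := (m : ℝ)⁻¹ • (y' - y) with hwdef
  have hyy' : ‖y' - y‖ < ε / 4 := by
    have heq : y' - y = (y' - e₀) + -(y - e₀) := by abel
    rw [heq]
    calc ‖(y' - e₀) + -(y - e₀)‖ ≤ ‖y' - e₀‖ + ‖-(y - e₀)‖ := norm_add_le _ _
      _ = ‖y' - e₀‖ + ‖y - e₀‖ := by rw [norm_neg]
      _ < ε / 4 := by linarith
  have hwn : ‖w‖ < rho e₁ ε * ε / 8 := by
    rw [hwdef, norm_smul, Real.norm_eq_abs, abs_of_pos (by positivity)]
    have h1 : (m:ℝ)⁻¹ * ‖y' - y‖ < (m:ℝ)⁻¹ * (ε / 4) := by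
      apply mul_lt_mul_of_pos_left hyy' (by positivity)
    have h2 : (m:ℝ)⁻¹ < rho e₁ ε / 2 := by
      rw [inv_lt_iff_one_lt_mul₀ hm0]
      have := (div_lt_iff₀ (by positivity : (0:ℝ) < rho e₁ ε)).mp hm
      nlinarith
    nlinarith [norm_nonneg (y' - y)]
  have hmw : ∀ j : ℕ, j ≤ m → ‖(j : ℝ) • w‖ ≤ ‖y' - y‖ := by
    intro j hj
    rw [hwdef, smul_smul, norm_smul, Real.norm_eq_abs]
    have h1 : |(j : ℝ) * (m:ℝ)⁻¹| ≤ 1 := by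
      rw [abs_of_nonneg (by positivity)]
      rw [mul_inv_le_iff₀ hm0, one_mul]
      exact_mod_cast hj
    nlinarith [norm_nonneg (y' - y), abs_nonneg ((j : ℝ) * (m:ℝ)⁻¹)]
  have key : ∀ j : ℕ, j ≤ m →
      f (y + (j:ℝ) • w + b + c) - f (y + (j:ℝ) • w + b) - f (y + (j:ℝ) • w + c)
        + f (y + (j:ℝ) • w)
      = f (y + b + c) - f (y + b) - f (y + c) + f y := by
    intro j
    induction j with
    | zero => intro _; norm_num
    | succ n ih =>
      intro hn
      have hn' : n ≤ m := by omega
      have hbase : ‖y + (n:ℝ) • w - e₀‖ < 2 * ε / 5 := by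
        calc ‖y + (n:ℝ) • w - e₀‖ ≤ ‖y - e₀‖ + ‖(n:ℝ) • w‖ := nsh _ _ _
          _ ≤ ‖y - e₀‖ + ‖y' - y‖ := by linarith [hmw n hn']
          _ < 2 * ε / 5 := by linarith
      have step := c3b H (z := y + (n:ℝ) • w) (u := w) hbase hwn hb hc hb' hc'
      have harg : y + ((n+1 : ℕ):ℝ) • w = y + (n:ℝ) • w + w := by
        push_cast
        rw [add_smul, one_smul]
        abel
      rw [harg, step]
      exact ih hn'
  have last := key m le_rfl
  have hfin : y + (m:ℝ) • w = y' := by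
    rw [hwdef, smul_smul, mul_inv_cancel₀ (by positivity), one_smul]
    abel
  rw [hfin] at last
  linarith [last]

end WithCoreHyp

/-- The candidate polar form, defined via a second difference at `e₀`. -/
noncomputable def Bt (f : V → ℝ) (e₀ : V) (u v : V) : ℝ :=
  (f (e₀ + u + v) - f (e₀ + u) - f (e₀ + v) + f e₀) / 2

theorem Bt_symm (f : V → ℝ) (e₀ u v : V) : Bt f e₀ u v = Bt f e₀ v u := by
  simp only [Bt]
  rw [show e₀ + u + v = e₀ + v + u by abel]
  ring

theorem Bt_zero_left (f : V → ℝ) (e₀ v : V) : Bt f e₀ 0 v = 0 := by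
  simp only [Bt, add_zero]
  ring

section WithCoreHyp2
variable (H : CoreHyp f e₀ e₁ ε)
include H

theorem c4a {y u v : V} (hy : ‖y - e₀‖ < ε / 10)
    (hu : ‖u‖ < rho e₁ ε * ε / 8) (hv : ‖v‖ < rho e₁ ε * ε / 8) :
    f (y + u + v) - f (y + u) - f (y + v) + f y = 2 * Bt f e₀ u v := by
  have hε := H.hε
  have hρ := rho_pos (e₁ := e₁) hε
  have hE := EE_pos (e₁ := e₁) hε
  have hρE := rho_mul_EE (e₁ := e₁) hε
  set a' : V := (rho e₁ ε / 4) • e₁ with ha'def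
  have ha' : Step e₁ ε (rho e₁ ε / 4) a' := ⟨by positivity, by simp [ha'def]; positivity⟩
  set a : V := u + a' with hadef
  set c : V := v + a' with hcdef
  have ha : Step e₁ ε (rho e₁ ε / 4) a := by
    refine ⟨by positivity, ?_⟩
    rw [hadef, ha'def, add_sub_cancel_right]
    calc ‖u‖ < rho e₁ ε * ε / 8 := hu
      _ < rho e₁ ε / 4 * ε := by nlinarith
  have hc : Step e₁ ε (rho e₁ ε / 4) c := by
    refine ⟨by positivity, ?_⟩
    rw [hcdef, ha'def, add_sub_cancel_right]
    calc ‖v‖ < rho e₁ ε * ε / 8 := hv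
      _ < rho e₁ ε / 4 * ε := by nlinarith
  have hna' : ‖a'‖ ≤ rho e₁ ε / 4 * EE e₁ ε := ha'.norm_le
  have hsmall : rho e₁ ε / 4 * EE e₁ ε ≤ ε / 400 := by nlinarith
  have hba : rho e₁ ε / 4 ≤ rho e₁ ε := by linarith
  set z : V := y - a' - a' with hzdef
  set z₀ : V := e₀ - a' - a' with hz₀def
  have hz : ‖z - e₀‖ < ε / 8 := by
    have heq : z - e₀ = (y - e₀) + -a' + -a' := by rw [hzdef]; abel
    rw [heq]
    calc ‖(y - e₀) + -a' + -a'‖ ≤ ‖(y - e₀) + -a'‖ + ‖-a'‖ := norm_add_le _ _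
      _ ≤ ‖y - e₀‖ + ‖-a'‖ + ‖-a'‖ := by linarith [norm_add_le (y - e₀) (-a')]
      _ = ‖y - e₀‖ + ‖a'‖ + ‖a'‖ := by rw [norm_neg]
      _ < ε / 8 := by nlinarith
  have hz₀ : ‖z₀ - e₀‖ < ε / 8 := by
    have heq : z₀ - e₀ = -a' + -a' := by rw [hz₀def]; abel
    rw [heq]
    calc ‖-a' + -a'‖ ≤ ‖-a'‖ + ‖-a'‖ := norm_add_le _ _
      _ = ‖a'‖ + ‖a'‖ := by rw [norm_neg]
      _ < ε / 8 := by nlinarith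
  have P1 := c3 H hz hz₀ ha hc hba hba
  have P2 := c3 H hz hz₀ ha ha' hba hba
  have P3 := c3 H hz hz₀ ha' hc hba hba
  have P4 := c3 H hz hz₀ ha' ha' hba hba
  rw [show z + a + c = y + u + v from by rw [hzdef, hadef, hcdef]; abel,
      show z₀ + a + c = e₀ + u + v from by rw [hz₀def, hadef, hcdef]; abel] at P1
  rw [show z + a + a' = y + u from by rw [hzdef, hadef]; abel,
      show z₀ + a + a' = e₀ + u from by rw [hz₀def, hadef]; abel] at P2
  rw [show z + a' + c = y + v from by rw [hzdef, hcdef]; abel,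
      show z₀ + a' + c = e₀ + v from by rw [hz₀def, hcdef]; abel] at P3
  rw [show z + a' + a' = y from by rw [hzdef]; abel,
      show z₀ + a' + a' = e₀ from by rw [hz₀def]; abel] at P4
  simp only [Bt]
  linarith [P1, P2, P3, P4]

theorem c4c {u u' v : V} (hu : ‖u‖ < rho e₁ ε * ε / 8) (hv : ‖v‖ < rho e₁ ε * ε / 8)
    (hu' : ‖u'‖ < ε / 10) :
    Bt f e₀ (u + u') v = Bt f e₀ u v + Bt f e₀ u' v := by
  have h1 := c4a H (y := e₀ + u') (by simpa using hu') hu hv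
  simp only [Bt] at h1 ⊢
  rw [show e₀ + (u + u') + v = e₀ + u' + u + v by abel,
      show e₀ + (u + u') = e₀ + u' + u by abel]
  linarith [h1]

theorem c4d {u c : V} {σ s : ℝ} (hu : ‖u‖ < ε / 2) (hc : Step e₁ ε σ c) :
    Bt f e₀ u (s • c) = s * Bt f e₀ u c := by
  have hε := H.hε
  have l1 := H.line (e₀ + u) c (by simpa using lt_trans hu (by linarith)) σ hc s
  have l2 := H.line e₀ c (by simp [hε]) σ hc s
  simp only [Bt]
  rw [l1, l2]
  ring

theorem c4e {u v : V} {s : ℝ} (hu : ‖u‖ < rho e₁ ε * ε / 8) (hv : ‖v‖ < rho e₁ ε * ε / 16)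
    (hs : |s| ≤ 1) :
    Bt f e₀ u (s • v) = s * Bt f e₀ u v := by
  have hε := H.hε
  have hρ := rho_pos (e₁ := e₁) hε
  have hE := EE_pos (e₁ := e₁) hε
  have hρE := rho_mul_EE (e₁ := e₁) hε
  set c' : V := (rho e₁ ε / 8) • e₁ with hc'def
  have hc' : Step e₁ ε (rho e₁ ε / 8) c' := ⟨by positivity, by simp [hc'def]; positivity⟩
  set c : V := v + c' with hcdef
  have hc : Step e₁ ε (rho e₁ ε / 8) c := by
    refine ⟨by positivity, ?_⟩
    rw [hcdef, hc'def, add_sub_cancel_right]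
    calc ‖v‖ < rho e₁ ε * ε / 16 := hv
      _ < rho e₁ ε / 8 * ε := by nlinarith
  have hnc' : ‖c'‖ ≤ rho e₁ ε / 8 * EE e₁ ε := hc'.norm_le
  have hsmall : rho e₁ ε / 8 * EE e₁ ε ≤ ε / 800 := by nlinarith
  have hnc'2 : ‖c'‖ < ε / 10 := by nlinarith
  have hnsc' : ‖s • c'‖ < ε / 10 := by
    rw [norm_smul, Real.norm_eq_abs]
    nlinarith [norm_nonneg c', abs_nonneg s]
  have hnsv : ‖s • v‖ < rho e₁ ε * ε / 16 := by
    rw [norm_smul, Real.norm_eq_abs]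
    nlinarith [norm_nonneg v, abs_nonneg s]
  have hvsmall : ‖v‖ < rho e₁ ε * ε / 8 := by nlinarith
  have hsvsmall : ‖s • v‖ < rho e₁ ε * ε / 8 := by nlinarith
  have hre := rho_mul_eps (e₁ := e₁) hε
  have huhalf : ‖u‖ < ε / 2 := by nlinarith
  have hi : Bt f e₀ u c = Bt f e₀ u v + Bt f e₀ u c' := by
    rw [Bt_symm f e₀ u c, hcdef, c4c H hvsmall hu hnc'2,
      Bt_symm f e₀ v u, Bt_symm f e₀ c' u]
  have hii : Bt f e₀ u (s • c) = Bt f e₀ u (s • v) + Bt f e₀ u (s • c') := by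
    rw [Bt_symm f e₀ u (s • c), hcdef, smul_add, c4c H hsvsmall hu hnsc',
      Bt_symm f e₀ (s • v) u, Bt_symm f e₀ (s • c') u]
  have hiii₁ : Bt f e₀ u (s • c) = s * Bt f e₀ u c := c4d H huhalf hc
  have hiii₂ : Bt f e₀ u (s • c') = s * Bt f e₀ u c' := c4d H huhalf hc'
  have hcomb := hii
  rw [hiii₁, hiii₂, hi] at hcomb
  linarith [hcomb]

set_option maxHeartbeats 1000000 in
/-- The analytic core: `f` agrees with a quadratic form on a ball around `e₀`. -/
theorem core [FiniteDimensional ℝ V] :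
    ∃ Q : QuadraticForm ℝ V, ∃ r : ℝ, 0 < r ∧ ∀ w : V, ‖w - e₀‖ < r → f w = Q w := by
  classical
  have hε := H.hε
  have hρ := rho_pos (e₁ := e₁) hε
  have hE := EE_pos (e₁ := e₁) hε
  have hρE := rho_mul_EE (e₁ := e₁) hε
  have hre := rho_mul_eps (e₁ := e₁) hε
  obtain ⟨β⟩ : Nonempty (Basis (Fin (finrank ℝ V)) ℝ V) := ⟨Module.finBasis ℝ V⟩
  -- bound for the coordinates
  have hcoord : ∀ i, ∃ Ki : ℝ, 0 ≤ Ki ∧ ∀ u : V, |β.repr u i| ≤ Ki * ‖u‖ := by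
    intro i
    refine ⟨‖LinearMap.toContinuousLinearMap (β.coord i)‖, norm_nonneg _, fun u => ?_⟩
    have h1 := (LinearMap.toContinuousLinearMap (β.coord i)).le_opNorm u
    simpa [Real.norm_eq_abs, Basis.coord_apply] using h1
  choose Ki hKi0 hKi using hcoord
  set K : ℝ := (∑ i, Ki i) + 1 with hKdef
  have hK0 : 0 < K := by
    have : 0 ≤ ∑ i, Ki i := Finset.sum_nonneg fun i _ => hKi0 i
    rw [hKdef]; linarith
  have hK : ∀ (u : V) i, |β.repr u i| ≤ K * ‖u‖ := by
    intro u i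
    have h1 : Ki i ≤ K := by
      rw [hKdef]
      have := Finset.single_le_sum (f := Ki) (fun j _ => hKi0 j) (Finset.mem_univ i)
      linarith
    calc |β.repr u i| ≤ Ki i * ‖u‖ := hKi i u
      _ ≤ K * ‖u‖ := mul_le_mul_of_nonneg_right h1 (norm_nonneg u)
  set MB : ℝ := ∑ i, ‖β i‖ with hMBdef
  have hMB0 : 0 ≤ MB := Finset.sum_nonneg fun i _ => norm_nonneg _
  set s₀ : ℝ := (rho e₁ ε * ε / 32) / (MB + 1) with hs₀def
  have hs₀ : 0 < s₀ := by rw [hs₀def]; positivity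
  have hs₀MB : s₀ * (MB + 1) = rho e₁ ε * ε / 32 := by
    rw [hs₀def]; field_simp
  set h : Fin (finrank ℝ V) → V := fun i => s₀ • β i with hhdef
  have hnh : ∀ i, ‖h i‖ < rho e₁ ε * ε / 32 := by
    intro i
    have hble : ‖β i‖ ≤ MB := by
      rw [hMBdef]
      exact Finset.single_le_sum (f := fun j => ‖β j‖) (fun j _ => norm_nonneg _)
        (Finset.mem_univ i)
    have : ‖h i‖ = s₀ * ‖β i‖ := by
      simp only [hhdef, norm_smul, Real.norm_eq_abs, abs_of_pos hs₀]
    rw [this]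
    nlinarith
  have hsum_norm : ∀ (S : Finset (Fin (finrank ℝ V))) (t : Fin (finrank ℝ V) → ℝ),
      (∀ i, |t i| ≤ 1) → ‖∑ i ∈ S, t i • h i‖ ≤ s₀ * MB := by
    intro S t ht
    calc ‖∑ i ∈ S, t i • h i‖ ≤ ∑ i ∈ S, ‖t i • h i‖ := norm_sum_le _ _
      _ ≤ ∑ i ∈ S, s₀ * ‖β i‖ := by
          apply Finset.sum_le_sum
          intro i _
          have : ‖t i • h i‖ = |t i| * (s₀ * ‖β i‖) := by
            simp only [hhdef, norm_smul, Real.norm_eq_abs, abs_of_pos hs₀]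
          rw [this]
          nlinarith [ht i, abs_nonneg (t i), mul_nonneg hs₀.le (norm_nonneg (β i))]
      _ ≤ ∑ i, s₀ * ‖β i‖ := by
          apply Finset.sum_le_sum_of_subset_of_nonneg (Finset.subset_univ S)
          intro i _ _
          positivity
      _ = s₀ * MB := by rw [hMBdef, Finset.mul_sum]
  have hsMB_small : s₀ * MB < rho e₁ ε * ε / 32 := by nlinarith
  -- the bilinear form
  obtain ⟨Bm, hBm_apply⟩ : ∃ B : V →ₗ[ℝ] V →ₗ[ℝ] ℝ, ∀ u v : V, B u v
      = ∑ i, ∑ j, Bt f e₀ (h i) (h j) / (s₀ * s₀) * (β.repr u i * β.repr v j) := by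
    refine ⟨∑ i, ∑ j, (Bt f e₀ (h i) (h j) / (s₀ * s₀)) • ((β.coord i).smulRight (β.coord j)),
      fun u v => ?_⟩
    simp only [LinearMap.coe_sum, Finset.sum_apply, LinearMap.smul_apply,
      LinearMap.smulRight_apply, Module.Basis.coord_apply, smul_eq_mul]
    try (apply Finset.sum_congr rfl; intro i _; apply Finset.sum_congr rfl; intro j _; ring)
  have hBmsymm : ∀ u v : V, Bm u v = Bm v u := by
    intro u v
    rw [hBm_apply, hBm_apply, Finset.sum_comm]
    apply Finset.sum_congr rfl; intro j _
    apply Finset.sum_congr rfl; intro i _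
    rw [Bt_symm]
    ring
  -- scaling in the first slot of Bt
  have hfirst : ∀ (s : ℝ) (x v : V), |s| ≤ 1 → ‖x‖ < rho e₁ ε * ε / 16 →
      ‖v‖ < rho e₁ ε * ε / 8 → Bt f e₀ (s • x) v = s * Bt f e₀ x v := by
    intro s x v hs hx hv
    rw [Bt_symm f e₀ (s • x) v, c4e H hv hx hs, Bt_symm f e₀ x v]
  -- additivity over sums
  have sumsplit : ∀ (S : Finset (Fin (finrank ℝ V))) (t : Fin (finrank ℝ V) → ℝ) (v : V),
      (∀ i, |t i| ≤ 1) → ‖v‖ < rho e₁ ε * ε / 8 →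
      Bt f e₀ (∑ i ∈ S, t i • h i) v = ∑ i ∈ S, t i * Bt f e₀ (h i) v := by
    intro S
    induction S using Finset.induction_on with
    | empty => intro t v _ _; simp [Bt_zero_left]
    | insert a S ha ih =>
      intro t v ht hv
      rw [Finset.sum_insert ha, Finset.sum_insert ha]
      have hx : ‖t a • h a‖ < rho e₁ ε * ε / 8 := by
        rw [norm_smul, Real.norm_eq_abs]
        nlinarith [hnh a, norm_nonneg (h a), abs_nonneg (t a), ht a]
      have hS : ‖∑ i ∈ S, t i • h i‖ < ε / 10 := by
        have h1 := hsum_norm S t ht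
        nlinarith
      rw [c4c H hx hv hS]
      rw [hfirst (t a) (h a) v (ht a) (by nlinarith [hnh a]) hv]
      rw [ih t v ht hv]
  set r₄ : ℝ := min (s₀ / K) (rho e₁ ε * ε / 16) with hr₄def
  have hr₄0 : 0 < r₄ := by
    rw [hr₄def]
    apply lt_min (by positivity) (by positivity)
  have expand : ∀ u v : V, ‖u‖ < r₄ → ‖v‖ < rho e₁ ε * ε / 8 →
      Bt f e₀ u v = ∑ i, (β.repr u i / s₀) * Bt f e₀ (h i) v := by
    intro u v hu hv
    have hco : ∀ i, |β.repr u i / s₀| ≤ 1 := by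
      intro i
      rw [abs_div, abs_of_pos hs₀, div_le_one hs₀]
      have h1 : ‖u‖ ≤ s₀ / K := le_of_lt (lt_of_lt_of_le hu (by rw [hr₄def]; exact min_le_left _ _))
      calc |β.repr u i| ≤ K * ‖u‖ := hK u i
        _ ≤ K * (s₀ / K) := mul_le_mul_of_nonneg_left h1 hK0.le
        _ = s₀ := by field_simp
    have hrepr : ∑ i, (β.repr u i / s₀) • h i = u := by
      calc ∑ i, (β.repr u i / s₀) • h i = ∑ i, β.repr u i • β i := by
            apply Finset.sum_congr rfl; intro i _
            simp only [hhdef]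
            rw [smul_smul, div_mul_cancel₀ _ hs₀.ne']
        _ = u := β.sum_repr u
    conv_lhs => rw [← hrepr]
    exact sumsplit Finset.univ _ v hco hv
  have hBmBt : ∀ u v : V, ‖u‖ < r₄ → ‖v‖ < r₄ → Bm u v = Bt f e₀ u v := by
    intro u v hu hv
    have hr₄8 : r₄ ≤ rho e₁ ε * ε / 8 := by
      rw [hr₄def]
      calc min (s₀ / K) (rho e₁ ε * ε / 16) ≤ rho e₁ ε * ε / 16 := min_le_right _ _
        _ ≤ rho e₁ ε * ε / 8 := by nlinarith
    have hv8 : ‖v‖ < rho e₁ ε * ε / 8 := lt_of_lt_of_le hv hr₄8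
    have h1 : Bt f e₀ u v = ∑ i, (β.repr u i / s₀) * Bt f e₀ (h i) v := expand u v hu hv8
    have h2 : ∀ i, Bt f e₀ (h i) v = ∑ j, (β.repr v j / s₀) * Bt f e₀ (h i) (h j) := by
      intro i
      rw [Bt_symm f e₀ (h i) v]
      rw [expand v (h i) hv (by nlinarith [hnh i])]
      apply Finset.sum_congr rfl; intro j _
      rw [Bt_symm f e₀ (h j) (h i)]
    rw [hBm_apply, h1]
    apply Finset.sum_congr rfl; intro i _
    rw [h2 i, Finset.mul_sum]
    apply Finset.sum_congr rfl; intro j _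
    field_simp
  -- the explicit quadratic dependence along rays from `e₀`
  have c6a : ∀ u : V, ‖u‖ < rho e₁ ε * ε / 32 → ∃ L G : ℝ, ∀ t : ℝ, |t| ≤ 1 →
      f (e₀ + t • u) = f e₀ + t * L + t ^ 2 * G := by
    intro u hu
    set c' : V := (rho e₁ ε / 4) • e₁ with hc'def
    have hc' : Step e₁ ε (rho e₁ ε / 4) c' := ⟨by positivity, by simp [hc'def]; positivity⟩
    set c : V := u + c' with hcdef
    have hc : Step e₁ ε (rho e₁ ε / 4) c := by
      refine ⟨by positivity, ?_⟩
      rw [hcdef, hc'def, add_sub_cancel_right]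
      nlinarith
    have hnc' : ‖c'‖ ≤ rho e₁ ε / 4 * EE e₁ ε := hc'.norm_le
    have hsm : rho e₁ ε / 4 * EE e₁ ε ≤ ε / 400 := by nlinarith
    have hnc : ‖c‖ < ε / 2 := by
      rw [hcdef]
      calc ‖u + c'‖ ≤ ‖u‖ + ‖c'‖ := norm_add_le _ _
        _ < ε / 2 := by nlinarith
    refine ⟨(f (e₀ + c) - f e₀ - f c) - (f (e₀ + c') - f e₀ - f c'),
            f c + f c' - f (e₀ + c + c') + f (e₀ + c) + f (e₀ + c') - f e₀, ?_⟩
    intro t ht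
    have hzbase : ‖e₀ + (-t) • c' - e₀‖ < ε := by
      simp only [add_sub_cancel_left, norm_smul, Real.norm_eq_abs, abs_neg]
      nlinarith [norm_nonneg c', abs_nonneg t]
    have l1 := H.line (e₀ + (-t) • c') c hzbase _ hc t
    have l2 := H.line e₀ c' (by simp [hε]) _ hc' (-t)
    have hcb : ‖e₀ + c - e₀‖ < ε := by
      simp only [add_sub_cancel_left]
      linarith
    have l3 := H.line (e₀ + c) c' hcb _ hc' (-t)
    rw [show e₀ + (-t) • c' + c = e₀ + c + (-t) • c' by abel] at l1
    rw [l3, l2] at l1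
    have harg : e₀ + t • u = e₀ + (-t) • c' + t • c := by
      rw [hcdef, smul_add, neg_smul]
      abel
    rw [harg, l1]
    ring
  -- the affine-defect function
  obtain ⟨φ₀, hφ₀def⟩ : ∃ c : ℝ, c = f e₀ - Bm e₀ e₀ := ⟨_, rfl⟩
  obtain ⟨l, hldef⟩ : ∃ l : V → ℝ, ∀ x : V,
      l x = f (e₀ + x) - Bm (e₀ + x) (e₀ + x) - φ₀ := ⟨_, fun x => rfl⟩
  have hl0 : l 0 = 0 := by rw [hldef, hφ₀def, add_zero]; ring
  set rA : ℝ := min r₄ (rho e₁ ε * ε / 32) with hrAdef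
  have hrA0 : 0 < rA := lt_min hr₄0 (by positivity)
  have hrA32 : rA ≤ rho e₁ ε * ε / 32 := by rw [hrAdef]; exact min_le_right _ _
  have hrA4 : rA ≤ r₄ := by rw [hrAdef]; exact min_le_left _ _
  have hadd : ∀ x y : V, ‖x‖ < rA → ‖y‖ < rA → l (x + y) = l x + l y := by
    intro x y hx hy
    have hx8 : ‖x‖ < rho e₁ ε * ε / 8 := by nlinarith
    have hy8 : ‖y‖ < rho e₁ ε * ε / 8 := by nlinarith
    have h1 := c4a H (y := e₀) (by simp [hε]) hx8 hy8
    have h2 : Bt f e₀ x y = Bm x y :=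
      (hBmBt x y (lt_of_lt_of_le hx hrA4) (lt_of_lt_of_le hy hrA4)).symm
    have hsxy : Bm x y = Bm y x := hBmsymm x y
    simp only [hldef]
    rw [show e₀ + (x + y) = e₀ + x + y by abel]
    simp only [map_add, LinearMap.add_apply]
    rw [h2] at h1
    linarith [h1, hsxy]
  have hpoly : ∀ u : V, ‖u‖ < rA → ∃ Lm Gm : ℝ, ∀ t : ℝ, |t| ≤ 1 →
      l (t • u) = t * Lm + t ^ 2 * Gm := by
    intro u hu
    obtain ⟨L, G, hLG⟩ := c6a u (lt_of_lt_of_le hu hrA32)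
    refine ⟨L - (Bm e₀ u + Bm u e₀), G - Bm u u, ?_⟩
    intro t ht
    have h1 := hLG t ht
    have h2 : Bm (e₀ + t • u) (e₀ + t • u)
        = Bm e₀ e₀ + t * (Bm e₀ u + Bm u e₀) + t ^ 2 * Bm u u := by
      simp only [map_add, LinearMap.add_apply, map_smul, LinearMap.smul_apply, smul_eq_mul]
      ring
    simp only [hldef]
    rw [h1, h2, hφ₀def]
    ring
  have hscale : ∀ (u : V) (t : ℝ), 0 < t →
      l ((t - 1) • e₀ + t • u) = t ^ 2 * l u + (t ^ 2 - 1) * φ₀ := by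
    intro u t ht
    have harg : e₀ + ((t - 1) • e₀ + t • u) = t • (e₀ + u) := by
      rw [smul_add, sub_smul, one_smul]
      abel
    have h1 : f (t • (e₀ + u)) = t ^ 2 * f (e₀ + u) := H.hom t ht.le _
    have h2 : Bm (t • (e₀ + u)) (t • (e₀ + u)) = t ^ 2 * Bm (e₀ + u) (e₀ + u) := by
      simp only [map_smul, LinearMap.smul_apply, smul_eq_mul]
      ring
    simp only [hldef]
    rw [harg, h1, h2]
    ring
  set δ : ℝ := min (1 / 2) (rA / (2 * (‖e₀‖ + 1))) with hδdef
  have hδ0 : 0 < δ := by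
    rw [hδdef]
    apply lt_min (by norm_num) (by positivity)
  have hδhalf : δ ≤ 1 / 2 := by rw [hδdef]; exact min_le_left _ _
  have hδe₀ : ∀ t : ℝ, |t - 1| ≤ δ → ‖(t - 1) • e₀‖ < rA := by
    intro t ht
    rw [norm_smul, Real.norm_eq_abs]
    have h1 : δ ≤ rA / (2 * (‖e₀‖ + 1)) := by rw [hδdef]; exact min_le_right _ _
    have h2 : δ * (2 * (‖e₀‖ + 1)) ≤ rA :=
      (le_div_iff₀ (by positivity : (0:ℝ) < 2 * (‖e₀‖ + 1))).mp h1
    nlinarith [norm_nonneg e₀, abs_nonneg (t - 1)]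
  have hsc2 : ∀ (u : V), ‖u‖ < rA → ∀ t : ℝ, |t - 1| ≤ δ → 0 < t → ‖t • u‖ < rA →
      l (t • u) = t ^ 2 * l u := by
    intro u hu t ht htpos htu
    have h1 := hscale u t htpos
    have h2 := hscale 0 t htpos
    rw [smul_zero, add_zero, hl0] at h2
    have h3 := hadd ((t - 1) • e₀) (t • u) (hδe₀ t ht) htu
    rw [h3] at h1
    rw [h2] at h1
    linarith [h1]
  have hlzero : ∀ u : V, ‖u‖ < rA → l u = 0 := by
    intro u hu
    obtain ⟨Lm, Gm, hpol⟩ := hpoly u hu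
    set t₀ : ℝ := 1 - δ / 2 with ht₀def
    have ht₀pos : 0 < t₀ := by rw [ht₀def]; linarith
    have ht₀lt : t₀ < 1 := by rw [ht₀def]; linarith
    have ht₀1 : |t₀| ≤ 1 := by rw [abs_of_pos ht₀pos]; linarith
    have ht₀d : |t₀ - 1| ≤ δ := by
      rw [ht₀def]
      rw [show 1 - δ / 2 - 1 = -(δ / 2) by ring, abs_neg, abs_of_pos (by linarith)]
      linarith
    have htu : ‖t₀ • u‖ < rA := by
      rw [norm_smul, Real.norm_eq_abs]
      nlinarith [norm_nonneg u, abs_of_pos ht₀pos]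
    have e1 := hsc2 u hu t₀ ht₀d ht₀pos htu
    have e2 := hpol t₀ ht₀1
    have e3 := hpol 1 (by norm_num)
    rw [one_smul] at e3
    norm_num at e3
    have hLm : Lm = 0 := by
      have h4 : (t₀ * (1 - t₀)) * Lm = 0 := by
        rw [e2] at e1
        linear_combination e1 + t₀ ^ 2 * e3
      have h6 : t₀ * (1 - t₀) ≠ 0 :=
        mul_ne_zero ht₀pos.ne' (by linarith : (0:ℝ) < 1 - t₀).ne' 
      exact (mul_eq_zero.mp h4).resolve_left h6
    have e4 := hpol (1 / 2) (by rw [abs_of_pos (by norm_num : (0:ℝ) < 1 / 2)]; norm_num)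
    have e4' : l ((1 / 2 : ℝ) • u) = 1 / 2 * Lm + 1 / 4 * Gm := by
      rw [e4]; norm_num
    have hnu : ‖(1 / 2 : ℝ) • u‖ < rA := by
      rw [norm_smul, Real.norm_eq_abs]
      rw [abs_of_pos (by norm_num : (0:ℝ) < 1/2)]
      nlinarith [norm_nonneg u]
    have e5 := hadd ((1 / 2 : ℝ) • u) ((1 / 2 : ℝ) • u) hnu hnu
    rw [show ((1 / 2 : ℝ)) • u + ((1 / 2 : ℝ)) • u = u by
      rw [← add_smul]; norm_num] at e5
    rw [hLm] at e3 e4'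
    linarith [e3, e4', e5]
  have hφ₀z : φ₀ = 0 := by
    set t₁ : ℝ := 1 + δ / 2 with ht₁def
    have ht₁pos : 0 < t₁ := by rw [ht₁def]; linarith
    have h2 := hscale 0 t₁ ht₁pos
    rw [smul_zero, add_zero, hl0] at h2
    have hd : |t₁ - 1| ≤ δ := by
      rw [ht₁def, show 1 + δ / 2 - 1 = δ / 2 by ring, abs_of_pos (by linarith)]
      linarith
    rw [hlzero _ (hδe₀ t₁ hd)] at h2
    have hne : t₁ ^ 2 - 1 ≠ 0 := by
      have : 1 < t₁ := by rw [ht₁def]; linarith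
      nlinarith
    have := h2.symm
    rw [mul_zero, zero_add] at this
    rcases mul_eq_zero.mp this with hcase | hcase
    · exact absurd hcase hne
    · exact hcase
  refine ⟨LinearMap.BilinMap.toQuadraticMap Bm, rA, hrA0, ?_⟩
  intro w hw
  have hu := hlzero (w - e₀) hw
  simp only [hldef] at hu
  rw [show e₀ + (w - e₀) = w by abel] at hu
  rw [LinearMap.BilinMap.toQuadraticMap_apply]
  rw [hφ₀z] at hu
  linarith [hu]

end WithCoreHyp2

/-! ### Grassmannian geometry -/

theorem exists_good_tuple {k : ℕ} [FiniteDimensional ℝ V]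
    (𝒪 : Set (Gr k V)) (h𝒪 : IsOpen 𝒪) (X : Gr k V) (hX : X ∈ 𝒪) :
    ∃ (e : Fin k → V) (ε : ℝ), 0 < ε ∧ LinearIndependent ℝ e ∧
      Submodule.span ℝ (Set.range e) = X.1 ∧
      ∀ u : Fin k → V, (∀ i, ‖u i - e i‖ < ε) →
        LinearIndependent ℝ u ∧ ∃ Z ∈ 𝒪, Z.1 = Submodule.span ℝ (Set.range u) := by
  classical
  set bX : Basis (Fin k) ℝ X.1 := Module.finBasisOfFinrankEq ℝ X.1 X.2 with hbX
  set e : Fin k → V := fun i => (bX i : V) with hedef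
  have hli : LinearIndependent ℝ e :=
    bX.linearIndependent.map' X.1.subtype (Submodule.ker_subtype X.1)
  have hspan : Submodule.span ℝ (Set.range e) = X.1 := by
    have h1 : Set.range e = X.1.subtype '' Set.range bX := by
      rw [hedef, ← Set.range_comp]; rfl
    rw [h1, Submodule.span_image, bX.span_eq, Submodule.map_subtype_top]
  set π : {v : Fin k → V // LinearIndependent ℝ v} → Gr k V :=
    fun v => ⟨Submodule.span ℝ (Set.range v.1), by
      rw [finrank_span_eq_card v.2, Fintype.card_fin]⟩ with hπ
  have hpre : IsOpen (π ⁻¹' 𝒪) := h𝒪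
  have hmem : (⟨e, hli⟩ : {v : Fin k → V // LinearIndependent ℝ v}) ∈ π ⁻¹' 𝒪 := by
    have heq : π ⟨e, hli⟩ = X := Subtype.ext hspan
    rw [Set.mem_preimage, heq]; exact hX
  obtain ⟨δ₁, hδ₁, hball₁⟩ := Metric.isOpen_iff.mp hpre _ hmem
  obtain ⟨δ₂, hδ₂, hball₂⟩ := Metric.isOpen_iff.mp
    (isOpen_setOf_linearIndependent (𝕜 := ℝ) (E := V) (ι := Fin k)) e hli
  refine ⟨e, min δ₁ δ₂ / 2, by positivity, hli, hspan, ?_⟩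
  intro u hu
  have hmin : 0 < min δ₁ δ₂ := lt_min hδ₁ hδ₂
  have hdu : dist u e < min δ₁ δ₂ := by
    rw [dist_pi_lt_iff hmin]
    intro i
    rw [dist_eq_norm]
    exact lt_of_lt_of_le (hu i) (by linarith)
  have hliu : LinearIndependent ℝ u :=
    hball₂ (Metric.mem_ball.mpr (lt_of_lt_of_le hdu (min_le_right _ _)))
  have hsub : (⟨u, hliu⟩ : {v : Fin k → V // LinearIndependent ℝ v})
      ∈ Metric.ball (⟨e, hli⟩ : {v : Fin k → V // LinearIndependent ℝ v}) δ₁ := by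
    rw [Metric.mem_ball, Subtype.dist_eq]
    exact lt_of_lt_of_le hdu (min_le_left _ _)
  exact ⟨hliu, π ⟨u, hliu⟩, hball₁ hsub, rfl⟩


theorem wSet_isOpen {k : ℕ} [FiniteDimensional ℝ V] (hk : 0 < k) (e : Fin k → V) (ε' : ℝ) :
    IsOpen {Z : Gr k V | ∃ u : Fin k → V, (∀ i, ‖u i - e i‖ < ε') ∧
      LinearIndependent ℝ u ∧ Submodule.span ℝ (Set.range u) = Z.1} := by
  classical
  have : Nonempty (Fin k) := ⟨⟨0, hk⟩⟩
  set 𝒲 : Set (Gr k V) := {Z : Gr k V | ∃ u : Fin k → V, (∀ i, ‖u i - e i‖ < ε') ∧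
      LinearIndependent ℝ u ∧ Submodule.span ℝ (Set.range u) = Z.1} with h𝒲
  set π : {v : Fin k → V // LinearIndependent ℝ v} → Gr k V :=
    fun v => ⟨Submodule.span ℝ (Set.range v.1), by
      rw [finrank_span_eq_card v.2, Fintype.card_fin]⟩ with hπ
  suffices h : IsOpen (π ⁻¹' 𝒲) by exact h
  rw [Metric.isOpen_iff]
  rintro ⟨v₀, li₀⟩ hv₀
  obtain ⟨u₀, hu₀n, hu₀li, hu₀span⟩ := hv₀
  have hu₀span' : Submodule.span ℝ (Set.range u₀) = Submodule.span ℝ (Set.range v₀) :=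
    hu₀span
  -- margin
  set M : ℝ := Finset.univ.sup' Finset.univ_nonempty (fun i => ‖u₀ i - e i‖) with hM
  have hMlt : M < ε' := by
    rw [hM, Finset.sup'_lt_iff]
    intro i _
    exact hu₀n i
  have hMax : ∀ i, ‖u₀ i - e i‖ ≤ M := by
    intro i
    rw [hM]
    exact Finset.le_sup' (fun i => ‖u₀ i - e i‖) (Finset.mem_univ i)
  set m : ℝ := ε' - M with hm
  have hm0 : 0 < m := by rw [hm]; linarith
  -- basis of the span of v₀
  set P : Submodule ℝ V := Submodule.span ℝ (Set.range v₀) with hP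
  set bP : Basis (Fin k) ℝ P := Basis.span li₀ with hbP
  have humem : ∀ i, u₀ i ∈ P := by
    intro i
    rw [← hu₀span']
    exact Submodule.subset_span ⟨i, rfl⟩
  set cmat : Fin k → Fin k → ℝ := fun i j => bP.repr ⟨u₀ i, humem i⟩ j with hcmat
  have key1 : ∀ i, ∑ j, cmat i j • v₀ j = u₀ i := by
    intro i
    have h1 : (∑ j, bP.repr ⟨u₀ i, humem i⟩ j • bP j : P) = ⟨u₀ i, humem i⟩ :=
      bP.sum_repr _
    have h2 : ((∑ j, bP.repr ⟨u₀ i, humem i⟩ j • bP j : P) : V) = u₀ i := by rw [h1]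
    rw [← h2]
    simp only [AddSubmonoidClass.coe_finset_sum, SetLike.val_smul]
    apply Finset.sum_congr rfl
    intro j _
    simp only [hcmat, hbP]
    congr 1
    exact (congrArg Subtype.val (Module.Basis.span_apply li₀ j)).symm
  have hdet : (Matrix.of cmat).det ≠ 0 := by
    intro hdet0
    obtain ⟨μ, hμ0, hμ⟩ := Matrix.exists_vecMul_eq_zero_iff.mpr hdet0
    have hsum : ∑ i, μ i • u₀ i = 0 := by
      calc ∑ i, μ i • u₀ i = ∑ i, μ i • ∑ j, cmat i j • v₀ j := by
            apply Finset.sum_congr rfl; intro i _; rw [key1]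
        _ = ∑ j, (∑ i, μ i * cmat i j) • v₀ j := by
            simp_rw [Finset.smul_sum, smul_smul]
            rw [Finset.sum_comm]
            simp_rw [Finset.sum_smul]
        _ = 0 := by
            apply Finset.sum_eq_zero
            intro j _
            have hj := congrFun hμ j
            simp only [Matrix.vecMul, dotProduct, Matrix.of_apply,
              Pi.zero_apply] at hj
            rw [hj, zero_smul]
    have hall := Fintype.linearIndependent_iff.mp hu₀li μ hsum
    exact hμ0 (funext fun i => hall i)
  have hunit : IsUnit (Matrix.of cmat).det := isUnit_iff_ne_zero.mpr hdet
  set Cinv : Matrix (Fin k) (Fin k) ℝ := (Matrix.of cmat)⁻¹ with hCinv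
  have hCC1 : Matrix.of cmat * Cinv = 1 := Matrix.mul_nonsing_inv _ hunit
  have hCC2 : Cinv * Matrix.of cmat = 1 := Matrix.nonsing_inv_mul _ hunit
  set KK : ℝ := ∑ i, ∑ j, |cmat i j| with hKK
  have hKK0 : 0 ≤ KK := by positivity
  refine ⟨m / (KK + 1), by positivity, ?_⟩
  rintro ⟨v, liv⟩ hv
  rw [Metric.mem_ball, Subtype.dist_eq] at hv
  set u : Fin k → V := fun i => ∑ j, cmat i j • v j with hudef
  have hdist : ∀ j, ‖v j - v₀ j‖ < m / (KK + 1) := by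
    intro j
    calc ‖v j - v₀ j‖ = dist (v j) (v₀ j) := (dist_eq_norm _ _).symm
      _ ≤ dist v v₀ := dist_le_pi_dist v v₀ j
      _ < m / (KK + 1) := hv
  have hun : ∀ i, ‖u i - e i‖ < ε' := by
    intro i
    have hrow : ∑ j, |cmat i j| ≤ KK := by
      rw [hKK]
      exact Finset.single_le_sum
        (f := fun i => ∑ j, |cmat i j|) (fun i _ => by positivity) (Finset.mem_univ i)
    have h1 : ‖u i - u₀ i‖ < m := by
      have heq : u i - u₀ i = ∑ j, cmat i j • (v j - v₀ j) := by
        simp only [hudef]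
        rw [← key1 i, ← Finset.sum_sub_distrib]
        apply Finset.sum_congr rfl
        intro j _
        rw [smul_sub]
      rw [heq]
      calc ‖∑ j, cmat i j • (v j - v₀ j)‖ ≤ ∑ j, ‖cmat i j • (v j - v₀ j)‖ :=
            norm_sum_le _ _
        _ ≤ ∑ j, |cmat i j| * (m / (KK + 1)) := by
            apply Finset.sum_le_sum
            intro j _
            rw [norm_smul, Real.norm_eq_abs]
            exact mul_le_mul_of_nonneg_left (hdist j).le (abs_nonneg _)
        _ = (∑ j, |cmat i j|) * (m / (KK + 1)) := by rw [← Finset.sum_mul]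
        _ ≤ KK * (m / (KK + 1)) := by
            apply mul_le_mul_of_nonneg_right hrow (by positivity)
        _ < m := by
            rw [← mul_div_assoc, div_lt_iff₀ (by positivity : (0:ℝ) < KK + 1)]
            nlinarith
    calc ‖u i - e i‖ = ‖(u i - u₀ i) + (u₀ i - e i)‖ := by rw [sub_add_sub_cancel]
      _ ≤ ‖u i - u₀ i‖ + ‖u₀ i - e i‖ := norm_add_le _ _
      _ < m + M := by
          have := hMax i
          linarith
      _ = ε' := by rw [hm]; ring
  have hliu : LinearIndependent ℝ u := by
    rw [Fintype.linearIndependent_iff]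
    intro μ hμ
    have hsum : ∑ j, (∑ i, μ i * cmat i j) • v j = 0 := by
      rw [← hμ]
      calc ∑ j, (∑ i, μ i * cmat i j) • v j
          = ∑ i, μ i • ∑ j, cmat i j • v j := by
            simp_rw [Finset.smul_sum, smul_smul]
            rw [Finset.sum_comm]
            simp_rw [Finset.sum_smul]
        _ = ∑ i, μ i • u i := by
            apply Finset.sum_congr rfl
            intro i _
            simp only [hudef]
    have hz : ∀ j, (∑ i, μ i * cmat i j) = 0 := by
      intro j
      exact Fintype.linearIndependent_iff.mp liv _ hsum j
    have hzv : Matrix.vecMul μ (Matrix.of cmat) = 0 := by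
      funext j
      simp only [Matrix.vecMul, dotProduct, Matrix.of_apply, Pi.zero_apply]
      exact hz j
    have hμeq : μ = 0 := by
      have h1 : Matrix.vecMul (Matrix.vecMul μ (Matrix.of cmat)) Cinv = μ := by
        rw [Matrix.vecMul_vecMul, hCC1, Matrix.vecMul_one]
      rw [hzv, Matrix.zero_vecMul] at h1
      exact h1.symm
    intro i
    rw [hμeq]; rfl
  have hspanvu : Submodule.span ℝ (Set.range u) = Submodule.span ℝ (Set.range v) := by
    apply le_antisymm
    · rw [Submodule.span_le]
      rintro _ ⟨i, rfl⟩
      simp only [hudef]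
      apply Submodule.sum_mem
      intro j _
      exact Submodule.smul_mem _ _ (Submodule.subset_span ⟨j, rfl⟩)
    · rw [Submodule.span_le]
      rintro _ ⟨i, rfl⟩
      have hvi : v i = ∑ j, Cinv i j • u j := by
        have h1 : ∑ j, Cinv i j • u j = ∑ l, ((Cinv * Matrix.of cmat) i l) • v l := by
          simp only [hudef]
          simp_rw [Finset.smul_sum, smul_smul]
          rw [Finset.sum_comm]
          apply Finset.sum_congr rfl
          intro l _
          rw [← Finset.sum_smul, Matrix.mul_apply]
          congr 1
        rw [h1, hCC2]
        simp [Matrix.one_apply]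
      rw [hvi]
      apply Submodule.sum_mem
      intro j _
      exact Submodule.smul_mem _ _ (Submodule.subset_span ⟨j, rfl⟩)
  exact ⟨u, hun, hliu, hspanvu⟩


theorem locally_matches {k : ℕ} [FiniteDimensional ℝ V] (hk : 2 ≤ k)
    {Φ : V → ℝ} (hΦhom : ∀ (c : ℝ) (v : V), 0 ≤ c → Φ (c • v) = c * Φ v)
    {𝒰 : Set (Gr k V)} (hPO : ∀ X ∈ 𝒰, PlaneOK (fun v => (Φ v) ^ 2) X.1)
    (𝒪 : Set (Gr k V)) (h𝒪 : IsOpen 𝒪) (h𝒪𝒰 : 𝒪 ⊆ 𝒰) (X : Gr k V) (hX : X ∈ 𝒪) :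
    ∃ (Q : QuadraticForm ℝ V) (𝒲 : Set (Gr k V)) (x₀ : V) (r : ℝ), 0 < r ∧
      IsOpen 𝒲 ∧ X ∈ 𝒲 ∧ 𝒲 ⊆ 𝒪 ∧
      (∀ Z ∈ 𝒲, ∀ z ∈ Z.1, (Φ z) ^ 2 = Q z) ∧
      (∀ w : V, ‖w - x₀‖ < r → ∃ Z ∈ 𝒲, w ∈ Z.1) := by
  classical
  set f : V → ℝ := fun v => (Φ v) ^ 2 with hfdef
  obtain ⟨e, ε₁, hε₁, heli, hespan, htuple⟩ := exists_good_tuple 𝒪 h𝒪 X hX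
  set i0 : Fin k := ⟨0, by omega⟩ with hi0
  set i1 : Fin k := ⟨1, by omega⟩ with hi1
  have hne : i1 ≠ i0 := by simp [hi0, hi1, Fin.ext_iff]
  have hom : ∀ t : ℝ, 0 ≤ t → ∀ x : V, f (t • x) = t ^ 2 * f x := by
    intro t ht x
    simp only [hfdef]
    rw [hΦhom t x ht]
    ring
  have line : ∀ z d : V, ‖z - e i0‖ < ε₁ → ∀ σ : ℝ, Step (e i1) ε₁ σ d →
      ∀ t : ℝ, f (z + t • d) = f z + t * (f (z + d) - f z - f d) + t ^ 2 * f d := by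
    intro z d hz σ hd t
    obtain ⟨hσ, hdn⟩ := hd
    set d' : V := σ⁻¹ • d with hd'def
    have hdd' : d = σ • d' := by rw [hd'def, smul_smul, mul_inv_cancel₀ hσ.ne', one_smul]
    have hd'n : ‖d' - e i1‖ < ε₁ := by
      rw [hd'def]
      have heq : σ⁻¹ • d - e i1 = σ⁻¹ • (d - σ • e i1) := by
        rw [smul_sub, smul_smul, inv_mul_cancel₀ hσ.ne', one_smul]
      rw [heq, norm_smul, Real.norm_eq_abs, abs_of_pos (by positivity : (0:ℝ) < σ⁻¹),
        ← div_eq_inv_mul, div_lt_iff₀ hσ]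
      linarith [hdn]
    set u : Fin k → V := fun i => if i = i0 then z else if i = i1 then d' else e i with hudef
    have htu : ∀ i, ‖u i - e i‖ < ε₁ := by
      intro i
      by_cases h0 : i = i0
      · subst h0
        have heq : u i0 = z := by simp [hudef]
        rw [heq]; exact hz
      · by_cases h1 : i = i1
        · subst h1
          have heq : u i1 = d' := by simp [hudef, hne]
          rw [heq]; exact hd'n
        · have heq : u i = e i := by simp [hudef, h0, h1]
          rw [heq]; simpa using hε₁
    obtain ⟨hliu, Z, hZ𝒪, hZspan⟩ := htuple u htu
    have hplane : PlaneOK f Z.1 := hPO Z (h𝒪𝒰 hZ𝒪)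
    have hzmem : z ∈ Z.1 := by
      rw [hZspan]
      exact Submodule.subset_span ⟨i0, by simp [hudef]⟩
    have hd'mem : d' ∈ Z.1 := by
      rw [hZspan]
      exact Submodule.subset_span ⟨i1, by simp [hudef, hne]⟩
    have hdmem : d ∈ Z.1 := by rw [hdd']; exact Z.1.smul_mem σ hd'mem
    have h1 := hplane z d hzmem hdmem 1 t
    simp only [one_smul, one_pow, one_mul] at h1
    rw [h1]; ring
  have H : CoreHyp f (e i0) (e i1) ε₁ := ⟨hε₁, hom, line⟩
  obtain ⟨Q, r, hr, hball⟩ := core H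
  set ε' : ℝ := min ε₁ r with hε'def
  have hε'0 : 0 < ε' := lt_min hε₁ hr
  set 𝒲 : Set (Gr k V) := {Z : Gr k V | ∃ u : Fin k → V, (∀ i, ‖u i - e i‖ < ε') ∧
      LinearIndependent ℝ u ∧ Submodule.span ℝ (Set.range u) = Z.1} with h𝒲def
  have h𝒲𝒪 : 𝒲 ⊆ 𝒪 := by
    rintro Z ⟨u, hun, hli, hspan⟩
    obtain ⟨_, Z', hZ'𝒪, hZ'span⟩ :=
      htuple u (fun i => lt_of_lt_of_le (hun i) (min_le_left _ _))
    have heq : Z' = Z := Subtype.ext (by rw [hZ'span, hspan])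
    rwa [← heq]
  refine ⟨Q, 𝒲, e i0, ε', hε'0, wSet_isOpen (by omega) e ε', ?_, h𝒲𝒪, ?_, ?_⟩
  · exact ⟨e, fun i => by simpa using hε'0, heli, hespan⟩
  · rintro Z hZ𝒲 z hz
    obtain ⟨u, hun, hli, hspan⟩ := hZ𝒲
    have hplane : PlaneOK f Z.1 := hPO Z (h𝒪𝒰 (h𝒲𝒪 ⟨u, hun, hli, hspan⟩))
    have hu0mem : u i0 ∈ Z.1 := by
      rw [← hspan]; exact Submodule.subset_span ⟨i0, rfl⟩
    exact hplane.global Q hball hu0mem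
      (lt_of_lt_of_le (hun i0) (min_le_right _ _)) z hz
  · intro w hw
    set u : Fin k → V := Function.update e i0 w with hudef
    have htu' : ∀ i, ‖u i - e i‖ < ε' := by
      intro i
      by_cases h0 : i = i0
      · subst h0
        have heq : u i0 = w := by simp [hudef]
        rw [heq]; exact hw
      · have heq : u i = e i := by simp [hudef, h0]
        rw [heq]; simpa using hε'0
    obtain ⟨hliu, Z, hZ𝒪, hZspan⟩ :=
      htuple u (fun i => lt_of_lt_of_le (htu' i) (min_le_left _ _))
    refine ⟨Z, ⟨u, htu', hliu, hZspan.symm⟩, ?_⟩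
    rw [hZspan]
    exact Submodule.subset_span ⟨i0, by simp [hudef]⟩

end VSpace

end EllipsoidProof

/-- **Ellipses only assemble into an ellipsoid.** If the restriction of a Minkowski norm
`Φ` to every `k`-plane from a nonempty connected open set `𝒰` is an inner product norm,
then there is a unique quadratic form `Q` on `V` with `(Φ|_X)² = Q|_X` for all `X ∈ 𝒰`,
and it is nonnegative definite. -/
theorem ellipses_assemble_into_ellipsoid
    {V : Type*} [NormedAddCommGroup V] [NormedSpace ℝ V] [FiniteDimensional ℝ V]
    (n k : ℕ) (hn : Module.finrank ℝ V = n) (hk : 2 ≤ k) (hkn : k < n)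
    (Φ : V → ℝ) (hΦ : IsMinkowskiNorm Φ)
    (𝒰 : Set (Gr k V)) (h𝒰open : IsOpen 𝒰) (h𝒰conn : IsConnected 𝒰)
    (hip : ∀ X ∈ 𝒰, ∃ q : QuadraticForm ℝ X.1, q.PosDef ∧
      ∀ x : X.1, Φ (x : V) = Real.sqrt (q x)) :
    ∃ Q : QuadraticForm ℝ V,
      (∀ X ∈ 𝒰, ∀ x : X.1, (Φ (x : V)) ^ 2 = Q (x : V)) ∧
      (∀ v : V, 0 ≤ Q v) ∧
      (∀ Q' : QuadraticForm ℝ V,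
        (∀ X ∈ 𝒰, ∀ x : X.1, (Φ (x : V)) ^ 2 = Q' (x : V)) → Q' = Q) := by
  classical
  obtain ⟨⟨hΦ0, hΦhom, hΦsub⟩, hΦpos⟩ := hΦ
  have hPO : ∀ X ∈ 𝒰, EllipsoidProof.PlaneOK (fun v => (Φ v) ^ 2) X.1 := by
    intro X hXm
    obtain ⟨q, hq, hquad⟩ := hip X hXm
    exact EllipsoidProof.planeOK_of_sqrt q hq hquad
  obtain ⟨Xb, hXb⟩ := h𝒰conn.nonempty
  obtain ⟨Qb, Wb, x₀, r₀, hr₀, hWbo, hXb𝒲, hWbsub, hmatchb, hcoverb⟩ :=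
    EllipsoidProof.locally_matches hk hΦhom hPO 𝒰 h𝒰open subset_rfl Xb hXb
  have hballb : ∀ w : V, ‖w - x₀‖ < r₀ → (Φ w) ^ 2 = Qb w := by
    intro w hw
    obtain ⟨Z, hZ, hwZ⟩ := hcoverb w hw
    exact hmatchb Z hZ w hwZ
  set A : Set (Gr k V) := {X : Gr k V | ∃ 𝒲 : Set (Gr k V), IsOpen 𝒲 ∧ X ∈ 𝒲 ∧ 𝒲 ⊆ 𝒰 ∧
    ∀ Z ∈ 𝒲, ∀ z ∈ Z.1, (Φ z) ^ 2 = Qb z} with hA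
  set B : Set (Gr k V) := {X : Gr k V | ∃ (𝒲 : Set (Gr k V)) (Q : QuadraticForm ℝ V),
    IsOpen 𝒲 ∧ X ∈ 𝒲 ∧ 𝒲 ⊆ 𝒰 ∧ Q ≠ Qb ∧ ∀ Z ∈ 𝒲, ∀ z ∈ Z.1, (Φ z) ^ 2 = Q z} with hB
  have hAopen : IsOpen A := by
    rw [isOpen_iff_forall_mem_open]
    rintro X ⟨𝒲, h1, h2, h3, h4⟩
    exact ⟨𝒲, fun Z hZ => ⟨𝒲, h1, hZ, h3, h4⟩, h1, h2⟩
  have hBopen : IsOpen B := by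
    rw [isOpen_iff_forall_mem_open]
    rintro X ⟨𝒲, Q, h1, h2, h3, h4, h5⟩
    exact ⟨𝒲, fun Z hZ => ⟨𝒲, Q, h1, hZ, h3, h4, h5⟩, h1, h2⟩
  have hcov : 𝒰 ⊆ A ∪ B := by
    intro X hXm
    obtain ⟨Q, 𝒲, x₀', r', hr', ho, hXw, hsub, hmatch, _⟩ :=
      EllipsoidProof.locally_matches hk hΦhom hPO 𝒰 h𝒰open subset_rfl X hXm
    by_cases hQ : Q = Qb
    · left
      refine ⟨𝒲, ho, hXw, hsub, ?_⟩
      rw [← hQ]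
      exact hmatch
    · right
      exact ⟨𝒲, Q, ho, hXw, hsub, hQ, hmatch⟩
  have hdisj : ∀ X ∈ 𝒰, X ∈ A → X ∈ B → False := by
    rintro X hXm ⟨𝒲A, hAo, hXA, hAsub, hAm⟩ ⟨𝒲B, QB, hBo, hXB, hBsub, hQne, hBm⟩
    obtain ⟨Q', 𝒲', x₀', r', hr', _, hXw', hsub', hmatch', hcov'⟩ :=
      EllipsoidProof.locally_matches hk hΦhom hPO (𝒲A ∩ 𝒲B) (hAo.inter hBo)
        (fun Z hZ => hAsub hZ.1) X ⟨hXA, hXB⟩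
    have hQQ : QB = Qb := by
      apply EllipsoidProof.quadratic_eq_on_ball hr' (x₀ := x₀')
      intro w hw
      obtain ⟨Z, hZ, hwZ⟩ := hcov' w hw
      have h1 := hBm Z (hsub' hZ).2 w hwZ
      have h2 := hAm Z (hsub' hZ).1 w hwZ
      rw [← h1]
      exact h2
    exact hQne hQQ
  have hUA : ∀ X ∈ 𝒰, X ∈ A := by
    intro X hXm
    by_contra hnot
    have hXB : X ∈ B := (hcov hXm).resolve_left hnot
    have hXAb : Xb ∈ A := ⟨Wb, hWbo, hXb𝒲, hWbsub, hmatchb⟩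
    obtain ⟨Y, hY𝒰, hYA, hYB⟩ :=
      h𝒰conn.2 A B hAopen hBopen hcov ⟨Xb, hXb, hXAb⟩ ⟨X, hXm, hXB⟩
    exact hdisj Y hY𝒰 hYA hYB
  refine ⟨Qb, ?_, ?_, ?_⟩
  · intro X hXm x
    obtain ⟨𝒲, _, hXw, _, hm⟩ := hUA X hXm
    exact hm X hXw (x : V) x.2
  · intro v
    set s : ℝ := r₀ / (2 * (‖v‖ + 1)) with hs
    have hs0 : 0 < s := by rw [hs]; positivity
    have hsr : s * (‖v‖ + 1) = r₀ / 2 := by rw [hs]; field_simp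
    have hsv : ‖s • v‖ < r₀ := by
      rw [norm_smul, Real.norm_eq_abs, abs_of_pos hs0]
      nlinarith [norm_nonneg v]
    have hpar : Qb (x₀ + s • v) + Qb (x₀ - s • v) - 2 * Qb x₀ = 2 * Qb (s • v) := by
      have h1 : Qb (x₀ + s • v) = Qb x₀ + Qb (s • v) + QuadraticMap.polar Qb x₀ (s • v) := by
        simp [QuadraticMap.polar]; try ring
      have h3 : Qb (x₀ + -(s • v))
          = Qb x₀ + Qb (-(s • v)) + QuadraticMap.polar Qb x₀ (-(s • v)) := by
        simp [QuadraticMap.polar]; try ring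
      have h4 : Qb (-(s • v)) = Qb (s • v) := by
        rw [show -(s • v) = (-1 : ℝ) • (s • v) by simp, QuadraticMap.map_smul]
        norm_num
      have h2 : Qb (x₀ - s • v) = Qb x₀ + Qb (s • v) - QuadraticMap.polar Qb x₀ (s • v) := by
        rw [sub_eq_add_neg, h3, QuadraticMap.polar_neg_right, h4]
        ring
      linarith
    have hf1 := hballb (x₀ + s • v) (by simpa using hsv)
    have hf2 : (Φ (x₀ - s • v)) ^ 2 = Qb (x₀ - s • v) := by
      apply hballb
      rw [show x₀ - s • v - x₀ = -(s • v) by abel, norm_neg]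
      exact hsv
    have hf0 := hballb x₀ (by simpa using hr₀)
    have hconv : 0 ≤ (Φ (x₀ + s • v)) ^ 2 + (Φ (x₀ - s • v)) ^ 2 - 2 * (Φ x₀) ^ 2 := by
      have hsum := hΦsub (x₀ + s • v) (x₀ - s • v)
      rw [show (x₀ + s • v) + (x₀ - s • v) = (2 : ℝ) • x₀ by
        rw [two_smul]; abel] at hsum
      rw [hΦhom 2 x₀ (by norm_num)] at hsum
      have h0 := hΦ0 (x₀ + s • v)
      have h1 := hΦ0 (x₀ - s • v)
      nlinarith [hsum, h0, h1, hΦ0 x₀, sq_nonneg (Φ (x₀ + s • v) - Φ (x₀ - s • v)),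
        sq_nonneg (Φ (x₀ + s • v) + Φ (x₀ - s • v) - 2 * Φ x₀)]
    have hQs : Qb (s • v) = (s * s) * Qb v := by
      rw [QuadraticMap.map_smul, smul_eq_mul]
    nlinarith [hpar, hconv, hf1, hf2, hf0, hQs, mul_pos hs0 hs0]
  · intro Q' hQ'
    apply EllipsoidProof.quadratic_eq_on_ball hr₀ (x₀ := x₀)
    intro w hw
    obtain ⟨Z, hZ, hwZ⟩ := hcoverb w hw
    have h1 := hQ' Z (hWbsub hZ) ⟨w, hwZ⟩
    have h2 := hballb w hw
    simp only [] at h1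
    rw [← h1]
    exact h2
end

section
/- Let v = (v₁, …, v_n) be a basis of a finite-dimensional real vector space V and F : V → ℝ a function whose restriction to each coordinate plane Π_{ij} = span{v_i, v_j} (1 ≤ i ≠ j ≤ n) is a quadratic form on that plane. Then there exists a unique quadratic form Q on V such that Q|_{Π_{ij}} = F|_{Π_{ij}} for all i ≠ j. -/
open Module Set Pointwise

private lemma quad_comb {W : Type*} [AddCommGroup W] [Module ℝ W]
    (q : QuadraticForm ℝ W) (x y : W) (a b : ℝ) :
    q (a • x + b • y) = a * a * q x + b * b * q y + a * b * (q (x + y) - q x - q y) := by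
  have h := QuadraticMap.map_add (⇑q) (a • x) (b • y)
  rw [h, QuadraticMap.polar_smul_left, QuadraticMap.polar_smul_right,
    QuadraticMap.map_smul, QuadraticMap.map_smul]
  simp only [QuadraticMap.polar, smul_eq_mul]
  ring

private lemma polar_self {W : Type*} [AddCommGroup W] [Module ℝ W]
    (q : QuadraticForm ℝ W) (x : W) : QuadraticMap.polar (⇑q) x x = 2 * q x := by
  have h2 : x + x = (2:ℝ) • x := by rw [two_smul]
  simp only [QuadraticMap.polar, h2, QuadraticMap.map_smul, smul_eq_mul]
  ring

/-- **Frame of quadratic forms.** If the restrictions of `F : V → ℝ` to all coordinate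
planes of a basis are quadratic forms, then there is a unique quadratic form `Q` on `V`
agreeing with `F` on all coordinate planes. -/
theorem frame_of_quadratic_forms
    {V : Type*} [AddCommGroup V] [Module ℝ V]
    (n : ℕ) (hn : 2 ≤ n) (v : Basis (Fin n) ℝ V) (F : V → ℝ)
    (hF : ∀ i j : Fin n, i ≠ j →
      ∃ q : QuadraticForm ℝ (Submodule.span ℝ {v i, v j}),
        ∀ w : Submodule.span ℝ {v i, v j}, F (w : V) = q w) :
    ∃! Q : QuadraticForm ℝ V,
      ∀ i j : Fin n, i ≠ j → ∀ w ∈ Submodule.span ℝ {v i, v j}, Q w = F w := by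
  classical
  -- matrix of the candidate bilinear form
  set M : Fin n → Fin n → ℝ := fun i j =>
    if i = j then F (v i) else (F (v i + v j) - F (v i) - F (v j)) / 2 with hM
  set B : V →ₗ[ℝ] V →ₗ[ℝ] ℝ := v.constr ℝ (fun i => v.constr ℝ (M i)) with hB
  have hBvv : ∀ i j, B (v i) (v j) = M i j := by
    intro i j; simp [hB, Basis.constr_basis]
  set Q : QuadraticForm ℝ V := LinearMap.BilinMap.toQuadraticMap B with hQ
  have hQapp : ∀ x : V, Q x = B x x := fun x => rfl
  have hMsymm : ∀ i j, M i j = M j i := by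
    intro i j
    by_cases h : i = j
    · subst h; rfl
    · simp only [hM, if_neg h, if_neg (Ne.symm h), add_comm (v i) (v j)]
      ring
  -- the key property: Q agrees with F on each coordinate plane
  have key : ∀ i j : Fin n, i ≠ j → ∀ w ∈ Submodule.span ℝ {v i, v j}, Q w = F w := by
    intro i j hij w hw
    obtain ⟨q, hq⟩ := hF i j hij
    obtain ⟨a, b, hab⟩ := Submodule.mem_span_pair.mp hw
    have hvi : v i ∈ Submodule.span ℝ {v i, v j} :=
      Submodule.subset_span (Set.mem_insert _ _)
    have hvj : v j ∈ Submodule.span ℝ {v i, v j} :=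
      Submodule.subset_span (Set.mem_insert_of_mem _ rfl)
    set xi : Submodule.span ℝ {v i, v j} := ⟨v i, hvi⟩
    set xj : Submodule.span ℝ {v i, v j} := ⟨v j, hvj⟩
    have hwsub : (⟨w, hw⟩ : Submodule.span ℝ {v i, v j}) = a • xi + b • xj := by
      apply Subtype.ext; simp [xi, xj, hab]
    -- compute F w
    have hFw : F w = a * a * F (v i) + b * b * F (v j) +
        a * b * (F (v i + v j) - F (v i) - F (v j)) := by
      have h1 : F w = q (⟨w, hw⟩ : Submodule.span ℝ {v i, v j}) := hq ⟨w, hw⟩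
      rw [h1, hwsub, quad_comb]
      have e1 : q xi = F (v i) := (hq xi).symm
      have e2 : q xj = F (v j) := (hq xj).symm
      have e3 : q (xi + xj) = F (v i + v j) := by
        have := hq (xi + xj); simpa [xi, xj] using this.symm
      rw [e1, e2, e3]
    -- compute Q w
    have hQw : Q w = a * a * M i i + a * b * M i j + b * a * M j i + b * b * M j j := by
      rw [hQapp, ← hab]
      simp only [map_add, map_smul, LinearMap.add_apply, LinearMap.smul_apply, hBvv,
        smul_eq_mul]
      ring
    rw [hQw, hFw]
    simp only [hM, if_pos rfl, if_neg hij, if_neg (Ne.symm hij)]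
    rw [add_comm (v j) (v i)]
    ring
  refine ⟨Q, key, ?_⟩
  -- uniqueness
  intro Q' hQ'
  -- values and polars agree on basis vectors
  have hval : ∀ i : Fin n, Q' (v i) = Q (v i) := by
    intro i
    obtain ⟨j, hj⟩ : ∃ j : Fin n, j ≠ i := by
      rcases Decidable.eq_or_ne i ⟨0, by omega⟩ with h | h
      · exact ⟨⟨1, by omega⟩, by simp [h, Fin.ext_iff]⟩
      · exact ⟨⟨0, by omega⟩, fun h' => h h'.symm⟩
    have hvi : v i ∈ Submodule.span ℝ {v i, v j} :=
      Submodule.subset_span (Set.mem_insert _ _)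
    rw [hQ' i j (Ne.symm hj) _ hvi, key i j (Ne.symm hj) _ hvi]
  have hpolar : ∀ i j : Fin n, QuadraticMap.polar (⇑Q') (v i) (v j) =
      QuadraticMap.polar (⇑Q) (v i) (v j) := by
    intro i j
    by_cases h : i = j
    · subst h; rw [polar_self, polar_self, hval]
    · have hvi : v i ∈ Submodule.span ℝ {v i, v j} :=
        Submodule.subset_span (Set.mem_insert _ _)
      have hvj : v j ∈ Submodule.span ℝ {v i, v j} :=
        Submodule.subset_span (Set.mem_insert_of_mem _ rfl)
      have hvij : v i + v j ∈ Submodule.span ℝ {v i, v j} := add_mem hvi hvj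
      simp only [QuadraticMap.polar]
      rw [hQ' i j h _ hvi, hQ' i j h _ hvj, hQ' i j h _ hvij,
        key i j h _ hvi, key i j h _ hvj, key i j h _ hvij]
  have hpolarBilin : Q'.polarBilin = Q.polarBilin := by
    apply v.ext; intro i
    apply LinearMap.ext; intro x
    have hx : x ∈ Submodule.span ℝ (Set.range v) := by
      rw [v.span_eq]; trivial
    induction hx using Submodule.span_induction with
    | mem y hy =>
        obtain ⟨j, rfl⟩ := hy
        simpa [QuadraticMap.polarBilin] using hpolar i j
    | zero => simp
    | add y z _ _ hy hz => simp [map_add, hy, hz]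
    | smul c y _ hy => simp [map_smul, hy]
  have hpolall : ∀ x y : V, QuadraticMap.polar (⇑Q') x y = QuadraticMap.polar (⇑Q) x y := by
    intro x y
    have h1 : Q'.polarBilin x y = Q.polarBilin x y := by rw [hpolarBilin]
    simpa [QuadraticMap.polarBilin] using h1
  ext x
  have h2 : (2:ℝ) * Q' x = (2:ℝ) * Q x := by
    rw [← polar_self Q' x, ← polar_self Q x, hpolall]
  linarith
end

section
/- Let Φ be a Minkowski norm on an n-dimensional real vector space V with unit ball B. Let X₁, X₂ be k-dimensional linear subspaces of V and Y an (n−k)-dimensional linear subspace such that B ⊂ (B ∩ X_i) + Y for i = 1, 2. Then (B ∩ X₁) + Y = (B ∩ X₂) + Y. -/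
open Module Set Pointwise

lemma cyl_eq_add {V : Type*} [AddCommGroup V] [Module ℝ V]
    (B : Set V) (X Y : Submodule ℝ V)
    (h : B ⊆ (B ∩ (X : Set V)) + (Y : Set V)) :
    (B ∩ (X : Set V)) + (Y : Set V) = B + (Y : Set V) := by
  apply Set.Subset.antisymm
  · exact Set.add_subset_add_right Set.inter_subset_left
  · rintro v ⟨b, hb, y, hy, rfl⟩
    obtain ⟨c, hc, y', hy', rfl⟩ := h hb
    exact ⟨c, hc, y' + y, Y.add_mem hy' hy, (add_assoc _ _ _).symm⟩

/-- **Two cylinders with the same generatrix coincide.** -/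
theorem two_cylinders_same_generatrix
    {V : Type*} [NormedAddCommGroup V] [NormedSpace ℝ V] [FiniteDimensional ℝ V]
    (n k : ℕ) (hn : Module.finrank ℝ V = n)
    (Φ : V → ℝ) (hΦ : IsMinkowskiNorm Φ) (B : Set V) (hB : B = {v | Φ v ≤ 1})
    (X₁ X₂ Y : Submodule ℝ V)
    (hX₁ : Module.finrank ℝ X₁ = k) (hX₂ : Module.finrank ℝ X₂ = k)
    (hY : Module.finrank ℝ Y = n - k)
    (h₁ : B ⊆ (B ∩ (X₁ : Set V)) + (Y : Set V))
    (h₂ : B ⊆ (B ∩ (X₂ : Set V)) + (Y : Set V)) :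
    (B ∩ (X₁ : Set V)) + (Y : Set V) = (B ∩ (X₂ : Set V)) + (Y : Set V) := by
  rw [cyl_eq_add B X₁ Y h₁, cyl_eq_add B X₂ Y h₂]
end

section
/- Let Φ be a Minkowski norm on an n-dimensional real vector space V with unit ball B, let 𝒰 ⊂ Gr_k V be an open set and X₀ ∈ 𝒰. Suppose that all subspaces X ∈ 𝒰 are Φ-contracting with one and the same contracting direction Y₀ ∈ Gr_{n−k} V. Then B is locally cylindrical near X₀. -/
open Module Set Pointwise

section Aux

open Module Set Pointwise

variable {V : Type*} [NormedAddCommGroup V] [NormedSpace ℝ V] [FiniteDimensional ℝ V]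

theorem mink_zero {Φ : V → ℝ} (h : IsMinkowskiSeminorm Φ) : Φ 0 = 0 := by
  have := h.2.1 0 0 le_rfl
  simpa using this

/-- Per-point contraction lemma. -/
theorem perpoint (k : ℕ) (Φ : V → ℝ)
    (𝒰 : Set (Gr k V)) (h𝒰open : IsOpen 𝒰) (X₀ : Gr k V) (hX₀ : X₀ ∈ 𝒰)
    (Y₀ : Submodule ℝ V)
    (hcontr : ∀ X ∈ 𝒰, IsContractingWithDirection Φ X.1 Y₀)
    (x₀ : V) (hx₀X : x₀ ∈ X₀.1) (hx₀ne : x₀ ≠ 0) :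
    ∃ δ > 0, ∀ x ∈ X₀.1, ‖x - x₀‖ < δ → ∀ y ∈ Y₀, ‖y‖ < δ → Φ (x + y) ≤ Φ x := by
  classical
  set x₀' : X₀.1 := ⟨x₀, hx₀X⟩ with hx₀'def
  have hx₀'ne : x₀' ≠ 0 := by
    intro h; apply hx₀ne; exact congrArg Subtype.val h
  have hsli : LinearIndepOn ℝ id ({x₀'} : Set X₀.1) :=
    LinearIndepOn.singleton hx₀'ne
  let b0 := Basis.extend hsli
  have hmem : x₀' ∈ hsli.extend (Set.subset_univ _) :=
    hsli.subset_extend _ rfl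
  haveI : Fintype (hsli.extend (Set.subset_univ ({x₀'} : Set X₀.1))) :=
    FiniteDimensional.fintypeBasisIndex b0
  have hcard : Fintype.card (hsli.extend (Set.subset_univ ({x₀'} : Set X₀.1))) = k := by
    rw [← Module.finrank_eq_card_basis b0, X₀.2]
  let e : _ ≃ Fin k := Fintype.equivFinOfCardEq hcard
  let eb : Basis (Fin k) ℝ X₀.1 := b0.reindex e
  let j : Fin k := e ⟨x₀', hmem⟩
  have hebj : eb j = x₀' := by
    simp only [eb, Basis.reindex_apply, j, Equiv.symm_apply_apply]
    exact Basis.extend_apply_self hsli _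
  let e'' : Fin k → V := fun i => (eb i : V)
  have he''ind : LinearIndependent ℝ e'' := by
    have := eb.linearIndependent
    exact this.map' X₀.1.subtype (Submodule.ker_subtype _)
  have he''j : e'' j = x₀ := by simp [e'', hebj, hx₀'def]
  let G : V × V → (Fin k → V) := fun p => Function.update e'' j (p.1 + p.2)
  have hGcont : Continuous G := by
    apply continuous_pi
    intro i
    by_cases hij : i = j
    · subst hij
      simp only [G, Function.update_self]
      exact continuous_fst.add continuous_snd
    · simp only [G, Function.update_of_ne hij]
      exact continuous_const
  let q : {v : Fin k → V // LinearIndependent ℝ v} → Gr k V :=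
    fun v => (⟨Submodule.span ℝ (Set.range v.1), by
        rw [finrank_span_eq_card v.2, Fintype.card_fin]⟩ : Gr k V)
  have hq : Continuous q := continuous_coinduced_rng
  have hOsub : IsOpen (q ⁻¹' 𝒰) := h𝒰open.preimage hq
  have hO : IsOpen (Subtype.val '' (q ⁻¹' 𝒰)) :=
    (isOpen_setOf_linearIndependent (𝕜 := ℝ)).isOpenMap_subtype_val _ hOsub
  have hW : IsOpen (G ⁻¹' (Subtype.val '' (q ⁻¹' 𝒰))) := hO.preimage hGcont
  have hspan : Submodule.span ℝ (Set.range e'') = X₀.1 := by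
    have : Set.range e'' = X₀.1.subtype '' (Set.range eb) := by
      rw [← Set.range_comp]; rfl
    rw [this, ← Submodule.map_span, eb.span_eq, Submodule.map_subtype_top]
  have hmem0 : (x₀, (0:V)) ∈ G ⁻¹' (Subtype.val '' (q ⁻¹' 𝒰)) := by
    have hGval : G (x₀, 0) = e'' := by
      simp only [G, add_zero]
      rw [← he''j, Function.update_eq_self]
    rw [Set.mem_preimage, hGval]
    refine ⟨⟨e'', he''ind⟩, ?_, rfl⟩
    have : q ⟨e'', he''ind⟩ = X₀ := by
      apply Subtype.ext
      exact hspan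
    rw [Set.mem_preimage, this]; exact hX₀
  obtain ⟨δ, hδpos, hball⟩ := Metric.isOpen_iff.1 hW _ hmem0
  refine ⟨δ, hδpos, fun x hxX hxd y hyY hyd => ?_⟩
  have hmemW : (x, y) ∈ G ⁻¹' (Subtype.val '' (q ⁻¹' 𝒰)) := by
    apply hball
    rw [Metric.mem_ball, Prod.dist_eq]
    apply max_lt
    · rwa [dist_eq_norm]
    · rwa [dist_eq_norm, sub_zero]
  obtain ⟨v, hv𝒰, hveq⟩ := hmemW
  obtain ⟨hc, hco⟩ := hcontr (q v) hv𝒰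
  have hxyX : x + y ∈ (q v).1 := by
    apply Submodule.subset_span
    refine ⟨j, ?_⟩
    rw [hveq]
    simp [G]
  have hP1 : ((q v).1.linearProjOfIsCompl Y₀ hc) (x + y) = ⟨x + y, hxyX⟩ := by
    exact Submodule.linearProjOfIsCompl_apply_left hc ⟨x + y, hxyX⟩
  have hP2 : ((q v).1.linearProjOfIsCompl Y₀ hc) y = 0 :=
    Submodule.linearProjOfIsCompl_apply_right hc ⟨y, hyY⟩
  have hPx : ((q v).1.linearProjOfIsCompl Y₀ hc) x = ⟨x + y, hxyX⟩ := by
    have h' : ((q v).1.linearProjOfIsCompl Y₀ hc) ((x + y) - y) = ⟨x + y, hxyX⟩ := by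
      rw [map_sub, hP1, hP2, sub_zero]
    simpa using h'
  have := hco x
  rw [hPx] at this
  exact this


theorem mink_sum {Φ : V → ℝ} (h : IsMinkowskiSeminorm Φ) {ι : Type*} (s : Finset ι)
    (f : ι → V) : Φ (∑ i ∈ s, f i) ≤ ∑ i ∈ s, Φ (f i) := by
  classical
  induction s using Finset.cons_induction with
  | empty => simp [mink_zero h]
  | cons a s ha ih =>
    rw [Finset.sum_cons, Finset.sum_cons]
    exact (h.2.2 _ _).trans (by linarith)

theorem mink_smul_le {Φ : V → ℝ} (h : IsMinkowskiSeminorm Φ) (c : ℝ) (v : V) :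
    Φ (c • v) ≤ |c| * (Φ v + Φ (-v)) := by
  rcases le_or_gt 0 c with hc | hc
  · rw [h.2.1 c v hc, abs_of_nonneg hc]
    have := h.1 (-v); have := h.1 v; nlinarith
  · have : c • v = (-c) • (-v) := by simp
    rw [this, h.2.1 (-c) (-v) (by linarith), abs_of_neg hc]
    have := h.1 v; have := h.1 (-v); nlinarith

theorem mink_bound {Φ : V → ℝ} (h : IsMinkowskiSeminorm Φ) :
    ∃ C : ℝ, 0 ≤ C ∧ ∀ v, Φ v ≤ C * ‖v‖ := by
  classical
  set b := Module.finBasis ℝ V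
  set M : Fin (finrank ℝ V) → ℝ := fun i => (Φ (b i) + Φ (-(b i))) * ‖(LinearMap.toContinuousLinearMap (b.coord i))‖
  refine ⟨∑ i, M i, Finset.sum_nonneg fun i _ => ?_, fun v => ?_⟩
  · have h1 := h.1 (b i); have h2 := h.1 (-(b i))
    positivity
  · have hv : v = ∑ i, b.repr v i • b i := (b.sum_repr v).symm
    calc Φ v = Φ (∑ i, b.repr v i • b i) := by rw [← hv]
      _ ≤ ∑ i, Φ (b.repr v i • b i) := mink_sum h _ _
      _ ≤ ∑ i, M i * ‖v‖ := by
          refine Finset.sum_le_sum fun i _ => ?_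
          refine (mink_smul_le h _ _).trans ?_
          have hco : |b.repr v i| ≤ ‖(LinearMap.toContinuousLinearMap (b.coord i))‖ * ‖v‖ := by
            have := (LinearMap.toContinuousLinearMap (b.coord i)).le_opNorm v
            simpa [Real.norm_eq_abs] using this
          have h1 := h.1 (b i); have h2 := h.1 (-(b i))
          calc |b.repr v i| * (Φ (b i) + Φ (-(b i)))
              ≤ (‖(LinearMap.toContinuousLinearMap (b.coord i))‖ * ‖v‖) * (Φ (b i) + Φ (-(b i))) := by
                apply mul_le_mul_of_nonneg_right hco (by linarith)
            _ = M i * ‖v‖ := by ring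
      _ = (∑ i, M i) * ‖v‖ := by rw [Finset.sum_mul]

theorem mink_continuous {Φ : V → ℝ} (h : IsMinkowskiSeminorm Φ) : Continuous Φ := by
  obtain ⟨C, hC0, hC⟩ := mink_bound h
  rw [Metric.continuous_iff]
  intro a ε hε
  refine ⟨ε / (C + 1), by positivity, fun x hx => ?_⟩
  have h1 : Φ x - Φ a ≤ Φ (x - a) := by
    have := h.2.2 (x - a) a; simpa using this
  have h2 : Φ a - Φ x ≤ Φ (a - x) := by
    have := h.2.2 (a - x) x; simpa using this
  have h3 : Φ (x - a) ≤ C * ‖x - a‖ := hC _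
  have h4 : Φ (a - x) ≤ C * ‖a - x‖ := hC _
  have hd : ‖x - a‖ < ε / (C + 1) := by rwa [← dist_eq_norm]
  have hd' : ‖a - x‖ < ε / (C + 1) := by rwa [norm_sub_rev]
  have key : ∀ w : V, ‖w‖ < ε / (C+1) → C * ‖w‖ < ε := by
    intro w hw
    have : C * ‖w‖ ≤ C * (ε / (C+1)) := by nlinarith [norm_nonneg w]
    have h5 : C * (ε / (C+1)) < ε := by
      have hpos : (0:ℝ) < C + 1 := by linarith
      have hdiv : (0:ℝ) < ε / (C+1) := div_pos hε hpos
      have hcan : (C+1) * (ε / (C+1)) = ε := mul_div_cancel₀ ε (by linarith)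
      nlinarith
    linarith
  rw [Real.dist_eq, abs_sub_lt_iff]
  constructor
  · have := key _ hd; linarith
  · have := key _ hd'; linarith

theorem mink_lower {Φ : V → ℝ} (h : IsMinkowskiNorm Φ) :
    ∃ c : ℝ, 0 < c ∧ ∀ v, c * ‖v‖ ≤ Φ v := by
  rcases subsingleton_or_nontrivial V with hV | hV
  · exact ⟨1, one_pos, fun v => by
      rw [Subsingleton.elim v 0]; simp [mink_zero h.1]⟩
  · obtain ⟨x0, hx0mem, hmin⟩ := (isCompact_sphere (0:V) 1).exists_isMinOn
      (NormedSpace.sphere_nonempty.mpr zero_le_one)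
      ((mink_continuous h.1).continuousOn)
    have hx0 : ‖x0‖ = 1 := by simpa using hx0mem
    have hx0ne : x0 ≠ 0 := by intro hx; rw [hx] at hx0; simp at hx0
    refine ⟨Φ x0, h.2 x0 hx0ne, fun v => ?_⟩
    rcases eq_or_ne v 0 with rfl | hv
    · simp [mink_zero h.1]
    · have hr : (0:ℝ) < ‖v‖ := norm_pos_iff.mpr hv
      have hu : ‖v‖⁻¹ • v ∈ Metric.sphere (0:V) 1 := by
        simp [norm_smul, abs_of_pos (inv_pos.mpr hr), inv_mul_cancel₀ hr.ne']
      have hΦu : Φ x0 ≤ Φ (‖v‖⁻¹ • v) := hmin hu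
      have : Φ (‖v‖⁻¹ • v) = ‖v‖⁻¹ * Φ v := h.1.2.1 _ _ (inv_nonneg.mpr hr.le)
      rw [this] at hΦu
      calc Φ x0 * ‖v‖ ≤ (‖v‖⁻¹ * Φ v) * ‖v‖ := by nlinarith
        _ = Φ v := by field_simp

theorem keyeps (k : ℕ) (Φ : V → ℝ) (hΦ : IsMinkowskiNorm Φ)
    (𝒰 : Set (Gr k V)) (h𝒰open : IsOpen 𝒰) (X₀ : Gr k V) (hX₀ : X₀ ∈ 𝒰)
    (Y₀ : Submodule ℝ V)
    (hcontr : ∀ X ∈ 𝒰, IsContractingWithDirection Φ X.1 Y₀) :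
    ∃ ε > 0, ∀ x ∈ X₀.1, Φ x = 1 → ∀ y ∈ Y₀, ‖y‖ < ε → Φ (x + y) ≤ 1 := by
  classical
  set S : Set V := {x : V | x ∈ X₀.1 ∧ Φ x = 1} with hSdef
  rcases Set.eq_empty_or_nonempty S with hSe | hSne
  · refine ⟨1, one_pos, fun x hxX hx1 y hyY hyd => ?_⟩
    exact absurd (⟨hxX, hx1⟩ : x ∈ S) (by intro h; have h' : x ∈ S := h; rw [hSe] at h'; exact Set.notMem_empty x h')
  · have hpp : ∀ x₀ ∈ S, ∃ δ > 0,
        ∀ x ∈ X₀.1, ‖x - x₀‖ < δ → ∀ y ∈ Y₀, ‖y‖ < δ → Φ (x + y) ≤ Φ x := by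
      intro x₀ hx₀
      have hx₀ne : x₀ ≠ 0 := by
        intro h; rw [h] at hx₀; have := hx₀.2; rw [mink_zero hΦ.1] at this; norm_num at this
      exact perpoint k Φ 𝒰 h𝒰open X₀ hX₀ Y₀ hcontr x₀ hx₀.1 hx₀ne
    choose! δ hδpos hδP using hpp
    have hScl : IsClosed S := by
      have h1 : IsClosed (X₀.1 : Set V) := Submodule.closed_of_finiteDimensional _
      have h2 : IsClosed (Φ ⁻¹' {1}) := isClosed_singleton.preimage (mink_continuous hΦ.1)
      exact h1.inter h2
    have hSbd : Bornology.IsBounded S := by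
      obtain ⟨c, hc0, hc⟩ := mink_lower hΦ
      rw [isBounded_iff_forall_norm_le]
      refine ⟨c⁻¹, fun x hx => ?_⟩
      have := hc x
      rw [hx.2] at this
      rw [inv_eq_one_div, le_div_iff₀ hc0]
      linarith
    have hScomp : IsCompact S := Metric.isCompact_of_isClosed_isBounded hScl hSbd
    obtain ⟨t, hcov⟩ := hScomp.elim_nhds_subcover' (fun x _ => Metric.ball x (δ x))
      (fun x hx => Metric.ball_mem_nhds x (hδpos x hx))
    have htne : t.Nonempty := by
      rcases hSne with ⟨x, hx⟩
      have := hcov hx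
      rw [Set.mem_iUnion₂] at this
      obtain ⟨x₀, hmem, _⟩ := this
      exact ⟨x₀, hmem⟩
    refine ⟨t.inf' htne (fun x => δ x.1), ?_, fun x hxX hx1 y hyY hyd => ?_⟩
    · exact (Finset.lt_inf'_iff htne).mpr (fun x hx => hδpos x.1 x.2)
    · have hxS : x ∈ S := ⟨hxX, hx1⟩
      have := hcov hxS
      rw [Set.mem_iUnion₂] at this
      obtain ⟨x₀, hmem, hball⟩ := this
      have hxd : ‖x - x₀.1‖ < δ x₀.1 := by
        rw [← dist_eq_norm]; exact hball
      have hyd' : ‖y‖ < δ x₀.1 :=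
        lt_of_lt_of_le hyd (Finset.inf'_le _ hmem)
      have := hδP x₀.1 x₀.2 x hxX hxd y hyY hyd'
      rwa [hx1] at this

end Aux

/-- **Same contracting direction gives a local cylinder.** If all subspaces from an open
set `𝒰 ∋ X₀` are `Φ`-contracting with one and the same contracting direction `Y₀`,
then the unit ball `B` is locally cylindrical near `X₀`. -/
theorem same_cylinder
    {V : Type*} [NormedAddCommGroup V] [NormedSpace ℝ V] [FiniteDimensional ℝ V]
    (n k : ℕ) (hn : Module.finrank ℝ V = n)
    (Φ : V → ℝ) (hΦ : IsMinkowskiNorm Φ) (B : Set V) (hB : B = {v | Φ v ≤ 1})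
    (𝒰 : Set (Gr k V)) (h𝒰open : IsOpen 𝒰) (X₀ : Gr k V) (hX₀ : X₀ ∈ 𝒰)
    (Y₀ : Submodule ℝ V) (hY₀ : Module.finrank ℝ Y₀ = n - k)
    (hcontr : ∀ X ∈ 𝒰, IsContractingWithDirection Φ X.1 Y₀) :
    IsLocallyCylindricalNear k B X₀.1 := by
  classical
  subst hB
  set B : Set V := {v | Φ v ≤ 1} with hBdef
  obtain ⟨h₀, hco₀⟩ := hcontr X₀ hX₀
  obtain ⟨ε, hε, hkey⟩ := keyeps k Φ hΦ 𝒰 h𝒰open X₀ hX₀ Y₀ hcontr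
  have hΦcont : Continuous Φ := mink_continuous hΦ.1
  have hΦ0 : Φ 0 = 0 := mink_zero hΦ.1
  have hΦnn := hΦ.1.1
  have hBclosed : IsClosed B := isClosed_le hΦcont continuous_const
  have hBbd : Bornology.IsBounded B := by
    obtain ⟨c, hc0, hc⟩ := mink_lower hΦ
    rw [isBounded_iff_forall_norm_le]
    refine ⟨c⁻¹, fun v hv => ?_⟩
    have h1 := hc v
    have h2 : Φ v ≤ 1 := hv
    rw [inv_eq_one_div, le_div_iff₀ hc0]
    nlinarith
  have hBcomp : IsCompact B := Metric.isCompact_of_isClosed_isBounded hBclosed hBbd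
  have hBconv : Convex ℝ B := by
    intro a ha b hb p q hp hq hpq
    have h1 : Φ (p • a + q • b) ≤ p * Φ a + q * Φ b := by
      calc Φ (p • a + q • b) ≤ Φ (p • a) + Φ (q • b) := hΦ.1.2.2 _ _
        _ = p * Φ a + q * Φ b := by rw [hΦ.1.2.1 _ _ hp, hΦ.1.2.1 _ _ hq]
    have ha' : Φ a ≤ 1 := ha
    have hb' : Φ b ≤ 1 := hb
    show Φ (p • a + q • b) ≤ 1
    nlinarith
  set K : Set V := B ∩ (X₀.1 : Set V) with hKdef
  set L : V →ₗ[ℝ] V := X₀.1.subtype ∘ₗ (X₀.1.linearProjOfIsCompl Y₀ h₀) with hLdef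
  have hLcont : Continuous L := L.continuous_of_finiteDimensional
  have hLx : ∀ x ∈ X₀.1, L x = x := by
    intro x hx
    simp only [hLdef, LinearMap.coe_comp, Function.comp_apply, Submodule.coe_subtype]
    erw [Submodule.projectionOnto_apply_left h₀ ⟨x, hx⟩]
  have hLy : ∀ y ∈ Y₀, L y = 0 := by
    intro y hy
    simp only [hLdef, LinearMap.coe_comp, Function.comp_apply, Submodule.coe_subtype]
    erw [Submodule.projectionOnto_apply_right h₀ ⟨y, hy⟩]
    rfl
  have hLX : ∀ v, L v ∈ X₀.1 := fun v => SetLike.coe_mem _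
  have hLd : ∀ v, v - L v ∈ Y₀ := by
    intro v
    have h1 := Submodule.projection_add_projection_eq_self h₀ v
    have h2 : v - L v = ((Y₀.linearProjOfIsCompl X₀.1 h₀.symm) v : V) := by
      simp only [hLdef, LinearMap.coe_comp, Function.comp_apply, Submodule.coe_subtype]
      rw [sub_eq_iff_eq_add']
      exact h1.symm
    rw [h2]
    exact SetLike.coe_mem _
  have hLco : ∀ v, Φ (L v) ≤ Φ v := hco₀
  have hBsubC : B ⊆ K + (Y₀ : Set V) := by
    intro v hv
    rw [Set.mem_add]
    exact ⟨L v, ⟨(hLco v).trans hv, hLX v⟩, v - L v, hLd v, by abel⟩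
  set U : Set V := {v | Φ v < 1} ∪ {v | ‖v - L v‖ < ε * Φ (L v)} with hUdef
  have hUopen : IsOpen U :=
    (isOpen_lt hΦcont continuous_const).union
      (isOpen_lt ((continuous_id.sub hLcont).norm)
        (continuous_const.mul (hΦcont.comp hLcont)))
  have hXU : (X₀.1 : Set V) ⊆ U := by
    intro x hx
    rcases lt_or_ge (Φ x) 1 with h | h
    · exact Or.inl h
    · refine Or.inr ?_
      show ‖x - L x‖ < ε * Φ (L x)
      rw [hLx x hx, sub_self, norm_zero]
      nlinarith
  have hCUsubB : (K + (Y₀ : Set V)) ∩ U ⊆ B := by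
    rintro v ⟨hvC, hvU⟩
    rw [Set.mem_add] at hvC
    obtain ⟨a, ⟨haB, haX⟩, b, hbY, hab⟩ := hvC
    rcases hvU with h | h
    · exact le_of_lt (show Φ v < 1 from h)
    · have hLv : L v = a := by
        rw [← hab, map_add, hLx a haX, hLy b hbY, add_zero]
      have hbn : ‖b‖ < ε * Φ a := by
        have : v - L v = b := by rw [hLv, ← hab]; abel
        rw [← this, ← hLv]; exact h
      have haΦ : Φ a ≤ 1 := haB
      have ht0 : 0 < Φ a := by nlinarith [norm_nonneg b]
      set t := Φ a with htdef
      have hxX : t⁻¹ • a ∈ X₀.1 := X₀.1.smul_mem _ haX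
      have hxΦ : Φ (t⁻¹ • a) = 1 := by
        rw [hΦ.1.2.1 _ _ (inv_nonneg.mpr ht0.le), inv_mul_cancel₀ ht0.ne']
      have hyY : t⁻¹ • b ∈ Y₀ := Y₀.smul_mem _ hbY
      have hyn : ‖t⁻¹ • b‖ < ε := by
        rw [norm_smul, Real.norm_eq_abs, abs_of_pos (inv_pos.mpr ht0)]
        calc t⁻¹ * ‖b‖ < t⁻¹ * (ε * t) := by
              exact mul_lt_mul_of_pos_left hbn (inv_pos.mpr ht0)
          _ = ε := by field_simp
      have hsum := hkey _ hxX hxΦ _ hyY hyn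
      have hv' : v = t • (t⁻¹ • a + t⁻¹ • b) := by
        rw [smul_add, smul_inv_smul₀ ht0.ne', smul_inv_smul₀ ht0.ne', hab]
      show Φ v ≤ 1
      rw [hv', hΦ.1.2.1 _ _ ht0.le]
      nlinarith
  refine ⟨K + (Y₀ : Set V), ⟨K, X₀.1, X₀.2, Set.inter_subset_right,
    hBcomp.inter_right (Submodule.closed_of_finiteDimensional _),
    hBconv.inter (X₀.1.convex), ?_, Y₀, h₀, rfl⟩, U, hUopen, hXU, ?_⟩
  · refine ⟨0, ?_⟩
    apply interior_maximal (t := {x : X₀.1 | Φ (x : V) < 1})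
    · intro x hx
      exact ⟨show Φ (x : V) ≤ 1 from le_of_lt hx, SetLike.coe_mem _⟩
    · exact isOpen_lt (hΦcont.comp continuous_subtype_val) continuous_const
    · show Φ ((0 : X₀.1) : V) < 1
      rw [ZeroMemClass.coe_zero, hΦ0]; norm_num
  · apply Set.ext
    intro v
    constructor
    · rintro ⟨hvB, hvU⟩
      exact ⟨hBsubC hvB, hvU⟩
    · rintro ⟨hvC, hvU⟩
      exact ⟨hCUsubB ⟨hvC, hvU⟩, hvU⟩
end

section
/- Let B be the unit ball of a Minkowski norm on an n-dimensional real vector space V, and let 𝒰 ⊂ Gr_k V be a nonempty connected open set. Suppose that B is locally cylindrical near X for every X ∈ 𝒰. Then there exists a single k-cylinder C such that B ∩ X = C ∩ X for all X ∈ 𝒰. -/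
set_option maxHeartbeats 1000000
set_option synthInstance.maxHeartbeats 400000

open Module Set Pointwise

section AuxLemmas

open Metric

variable {V : Type*} [NormedAddCommGroup V] [NormedSpace ℝ V] [FiniteDimensional ℝ V]

/-- A set contained in a ball and invariant under translation by `a` forces `a = 0`. -/
lemma aux_translate {K : Set V} {R : ℝ} (hne : K.Nonempty) (hb : K ⊆ closedBall 0 R)
    {a : V} (ha : ∀ x ∈ K, x + a ∈ K) : a = 0 := by
  by_contra h0
  obtain ⟨x₀, hx₀⟩ := hne
  have key : ∀ N : ℕ, x₀ + (N : ℝ) • a ∈ K := by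
    intro N
    induction N with
    | zero => simpa using hx₀
    | succ n ih =>
      have h1 := ha _ ih
      have e : x₀ + (n : ℝ) • a + a = x₀ + ((n + 1 : ℕ) : ℝ) • a := by
        push_cast
        rw [add_smul, one_smul, ← add_assoc]
      rwa [e] at h1
  have hbound : ∀ N : ℕ, (N : ℝ) * ‖a‖ ≤ R + ‖x₀‖ := by
    intro N
    have h1 := hb (key N)
    rw [mem_closedBall_zero_iff] at h1
    have h2 : ‖((N : ℝ) • a : V)‖ ≤ ‖x₀ + (N : ℝ) • a‖ + ‖x₀‖ := by
      have he : ((N : ℝ) • a : V) = (x₀ + (N : ℝ) • a) - x₀ := by abel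
      calc ‖((N : ℝ) • a : V)‖ = ‖(x₀ + (N : ℝ) • a) - x₀‖ := congrArg norm he
      _ ≤ ‖x₀ + (N : ℝ) • a‖ + ‖x₀‖ := norm_sub_le _ _
    rw [norm_smul, Real.norm_natCast] at h2
    linarith
  have hna : 0 < ‖a‖ := norm_pos_iff.mpr h0
  obtain ⟨N, hN⟩ := exists_nat_gt ((R + ‖x₀‖) / ‖a‖)
  have := hbound N
  rw [div_lt_iff₀ hna] at hN
  linarith

/-- Anti-Lipschitz bound for a linearly independent family. -/
lemma aux_anti {k : ℕ} {v : Fin k → V} (hv : LinearIndependent ℝ v) :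
    ∃ m : ℝ, 0 < m ∧ ∀ c : Fin k → ℝ, m * ‖c‖ ≤ ‖∑ i, c i • v i‖ := by
  let f : (Fin k → ℝ) →ₗ[ℝ] V :=
    { toFun := fun c => ∑ i, c i • v i
      map_add' := by intro c d; simp [add_smul, Finset.sum_add_distrib]
      map_smul' := by intro r c; simp [smul_smul, Finset.smul_sum] }
  have hinj : Function.Injective f := by
    intro c d hcd
    have hz : f (c - d) = 0 := by rw [map_sub, hcd, sub_self]
    have := Fintype.linearIndependent_iff.mp hv (c - d) (by
      simpa [f, sub_smul, Finset.sum_sub_distrib] using hz)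
    funext i
    have := this i
    simpa [sub_eq_zero] using this
  let e := LinearEquiv.ofInjective f hinj
  have hcont : Continuous (e.symm : LinearMap.range f →ₗ[ℝ] (Fin k → ℝ)) :=
    LinearMap.continuous_of_finiteDimensional _
  let g := LinearMap.toContinuousLinearMap (e.symm : LinearMap.range f →ₗ[ℝ] (Fin k → ℝ))
  refine ⟨(‖g‖ + 1)⁻¹, by positivity, fun c => ?_⟩
  have h1 : ‖c‖ ≤ ‖g‖ * ‖e c‖ := by
    have h := g.le_opNorm (e c)
    have he : g (e c) = c := by
      show (e.symm : LinearMap.range f →ₗ[ℝ] (Fin k → ℝ)) (e c) = c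
      simp
    rwa [he] at h
  have h2 : ‖(e c : V)‖ = ‖f c‖ := by
    congr 1
  have h3 : ‖(e c : V)‖ = ‖e c‖ := rfl
  have hg : 0 ≤ ‖g‖ := ContinuousLinearMap.opNorm_nonneg g
  have hfc : 0 ≤ ‖f c‖ := norm_nonneg _
  have h4 : ‖c‖ ≤ (‖g‖ + 1) * ‖f c‖ := by
    calc ‖c‖ ≤ ‖g‖ * ‖e c‖ := h1
    _ = ‖g‖ * ‖f c‖ := by rw [← h3, h2]
    _ ≤ (‖g‖ + 1) * ‖f c‖ := by nlinarith
  have : (‖g‖ + 1)⁻¹ * ‖c‖ ≤ (‖g‖ + 1)⁻¹ * ((‖g‖ + 1) * ‖f c‖) :=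
    mul_le_mul_of_nonneg_left h4 (by positivity)
  calc (‖g‖ + 1)⁻¹ * ‖c‖ ≤ (‖g‖ + 1)⁻¹ * ((‖g‖ + 1) * ‖f c‖) := this
  _ = ‖f c‖ := by field_simp
  _ = ‖∑ i, c i • v i‖ := rfl

lemma proj_coe_left {X Y : Submodule ℝ V} (h : IsCompl X Y) {x : V} (hx : x ∈ X) :
    ((X.linearProjOfIsCompl Y h x : X) : V) = x := by
  have := Submodule.linearProjOfIsCompl_apply_left h ⟨x, hx⟩
  exact congrArg Subtype.val this

lemma proj_sub_mem {X Y : Submodule ℝ V} (h : IsCompl X Y) (w : V) :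
    w - ((X.linearProjOfIsCompl Y h w : X) : V) ∈ Y := by
  have hw : w ∈ X ⊔ Y := by rw [h.sup_eq_top]; trivial
  obtain ⟨x, hx, y, hy, rfl⟩ := Submodule.mem_sup.mp hw
  have h1 : ((X.linearProjOfIsCompl Y h (x + y) : X) : V) = x := by
    rw [map_add, Submodule.coe_add, proj_coe_left h hx,
      @id (X.linearProjOfIsCompl Y h y = 0) (Submodule.linearProjOfIsCompl_apply_right' h hy), Submodule.coe_zero, add_zero]
  rw [h1]
  simpa using hy

lemma mem_add_iff_proj {X Y : Submodule ℝ V} (h : IsCompl X Y) {K : Set V}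
    (hK : K ⊆ (X : Set V)) (w : V) :
    w ∈ K + (Y : Set V) ↔ ((X.linearProjOfIsCompl Y h w : X) : V) ∈ K := by
  constructor
  · intro hw
    obtain ⟨x, hx, y, hy, rfl⟩ := Set.mem_add.mp hw
    have h1 : ((X.linearProjOfIsCompl Y h (x + y) : X) : V) = x := by
      rw [map_add, Submodule.coe_add, proj_coe_left h (hK hx),
        @id (X.linearProjOfIsCompl Y h y = 0) (Submodule.linearProjOfIsCompl_apply_right' h hy), Submodule.coe_zero, add_zero]
    rw [h1]; exact hx
  · intro hw
    exact Set.mem_add.mpr ⟨_, hw, _, proj_sub_mem h w, by abel⟩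

/-- Rebasing a cylinder coinciding with `B` near a `k`-dimensional subspace `X`:
it equals `(B ∩ X) + Y` for a complement `Y` of `X`. -/
lemma aux_rebase {k : ℕ} {B C : Set V} {R : ℝ} (hBb : B ⊆ closedBall 0 R)
    (h0 : (0 : V) ∈ B) {X : Submodule ℝ V} (hX : Module.finrank ℝ X = k)
    (hcyl : IsCylinder k C) {U : Set V} (hXU : (X : Set V) ⊆ U) (hU : B ∩ U = C ∩ U) :
    ∃ Y : Submodule ℝ V, IsCompl X Y ∧ C = (B ∩ (X : Set V)) + (Y : Set V) := by
  obtain ⟨K, W, hWk, hKW, _, _, hKint, Y, hcomplW, hCK⟩ := hcyl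
  have h0C : (0 : V) ∈ C := by
    have h1 : (0 : V) ∈ B ∩ U := ⟨h0, hXU X.zero_mem⟩
    rw [hU] at h1; exact h1.1
  obtain ⟨κ₀, hκ₀, y₀, hy₀, hsum⟩ := Set.mem_add.mp (hCK ▸ h0C)
  have hR0 : 0 ≤ R := by
    have := hBb h0; rwa [mem_closedBall_zero_iff, norm_zero] at this
  have hdisj : Disjoint X Y := by
    rw [Submodule.disjoint_def]
    intro x hxX hxY
    by_contra hx0
    have hnx : 0 < ‖x‖ := norm_pos_iff.mpr hx0
    set t : ℝ := (R + 1) / ‖x‖ with htdef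
    have htpos : 0 < t := by positivity
    have htx_mem : t • x ∈ C := by
      rw [hCK]
      exact Set.mem_add.mpr ⟨κ₀, hκ₀, y₀ + t • x, Y.add_mem hy₀ (Y.smul_mem t hxY), by
        rw [← add_assoc, hsum, zero_add]⟩
    have htx_B : t • x ∈ B := by
      have h1 : t • x ∈ C ∩ U := ⟨htx_mem, hXU (X.smul_mem t hxX)⟩
      rw [← hU] at h1; exact h1.1
    have hnorm := hBb htx_B
    rw [mem_closedBall_zero_iff, norm_smul, Real.norm_eq_abs, abs_of_pos htpos] at hnorm
    rw [htdef, div_mul_cancel₀ _ hnx.ne'] at hnorm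
    linarith
  have hsup : X ⊔ Y = ⊤ := by
    apply Submodule.eq_top_of_finrank_eq
    have h1 := Submodule.finrank_sup_add_finrank_inf_eq X Y
    rw [hdisj.eq_bot, finrank_bot] at h1
    have h2 := Submodule.finrank_add_eq_of_isCompl hcomplW
    omega
  have hcompl : IsCompl X Y := ⟨hdisj, codisjoint_iff.mpr hsup⟩
  refine ⟨Y, hcompl, ?_⟩
  have hCY : ∀ c ∈ C, ∀ y ∈ Y, c + y ∈ C := by
    intro c hc y hy
    rw [hCK] at hc ⊢
    obtain ⟨κ, hκ, y₁, hy₁, rfl⟩ := Set.mem_add.mp hc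
    exact Set.mem_add.mpr ⟨κ, hκ, y₁ + y, Y.add_mem hy₁ hy, (add_assoc _ _ _).symm⟩
  have hCX : C ∩ (X : Set V) = B ∩ (X : Set V) := by
    ext w
    constructor
    · rintro ⟨hwC, hwX⟩
      have h1 : w ∈ C ∩ U := ⟨hwC, hXU hwX⟩
      rw [← hU] at h1; exact ⟨h1.1, hwX⟩
    · rintro ⟨hwB, hwX⟩
      have h1 : w ∈ B ∩ U := ⟨hwB, hXU hwX⟩
      rw [hU] at h1; exact ⟨h1.1, hwX⟩
  ext w
  constructor
  · intro hwC
    have hw' : w ∈ X ⊔ Y := by rw [hsup]; trivial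
    obtain ⟨x, hx, y, hy, rfl⟩ := Submodule.mem_sup.mp hw'
    have hxC : x ∈ C := by
      have := hCY _ hwC (-y) (Y.neg_mem hy)
      simpa using this
    have hxB : x ∈ B ∩ (X : Set V) := by
      rw [← hCX]; exact ⟨hxC, hx⟩
    exact Set.mem_add.mpr ⟨x, hxB, y, hy, rfl⟩
  · intro hw
    obtain ⟨x, hx, y, hy, rfl⟩ := Set.mem_add.mp hw
    have hxC : x ∈ C := by
      rw [← hCX] at hx; exact hx.1
    exact hCY x hxC y hy

/-- If two rebased cylinders through `X` coincide with `B` near `X`, their directions agree. -/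
lemma aux_sub {B Ca Cb : Set V} {R : ℝ} {X Ya Yb : Submodule ℝ V} (ha : IsCompl X Ya)
    (hb : IsCompl X Yb) (hCa : Ca = (B ∩ (X : Set V)) + (Ya : Set V))
    (hCb : Cb = (B ∩ (X : Set V)) + (Yb : Set V))
    {U : Set V} (hUo : IsOpen U) (hXU : (X : Set V) ⊆ U)
    (hBa : B ∩ U = Ca ∩ U) (hBb' : B ∩ U = Cb ∩ U)
    (hBR : B ⊆ closedBall 0 R) (h0 : (0 : V) ∈ B) : Yb ≤ Ya := by
  set K₀ := B ∩ (X : Set V) with hK₀def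
  have hK₀X : K₀ ⊆ (X : Set V) := inter_subset_right
  have hK₀R : K₀ ⊆ closedBall 0 R := fun x hx => hBR hx.1
  have hne : K₀.Nonempty := ⟨0, h0, X.zero_mem⟩
  have hclX : IsClosed (X : Set V) := Submodule.closed_of_finiteDimensional X
  have hcpt : IsCompact (closure K₀) :=
    (isCompact_closedBall (0 : V) R).of_isClosed_subset isClosed_closure
      (closure_minimal hK₀R Metric.isClosed_closedBall)
  have hclU : closure K₀ ⊆ U := (closure_minimal hK₀X hclX).trans hXU
  obtain ⟨ε, hε, hthick⟩ := hcpt.exists_thickening_subset_open hUo hclU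
  intro y' hy'
  by_cases hy0 : y' = 0
  · simp [hy0]
  have hny : 0 < ‖y'‖ := norm_pos_iff.mpr hy0
  set t : ℝ := ε / (2 * ‖y'‖) with htdef
  have htpos : 0 < t := by positivity
  set a : V := ((X.linearProjOfIsCompl Ya ha (t • y') : X) : V) with hadef
  have hkey : ∀ x ∈ K₀, x + a ∈ K₀ := by
    intro x hx
    have hxX : x ∈ X := hx.2
    have h1 : x + t • y' ∈ Cb := by
      rw [hCb]; exact Set.mem_add.mpr ⟨x, hx, t • y', Yb.smul_mem t hy', rfl⟩
    have h2 : x + t • y' ∈ U := by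
      apply hthick
      rw [Metric.mem_thickening_iff]
      refine ⟨x, subset_closure hx, ?_⟩
      rw [dist_eq_norm]
      have he : x + t • y' - x = t • y' := by abel
      have he2 : t * ‖y'‖ = ε / 2 := by
        rw [htdef]; field_simp
      rw [he, norm_smul, Real.norm_eq_abs, abs_of_pos htpos, he2]
      linarith
    have h3 : x + t • y' ∈ Ca := by
      have hm : x + t • y' ∈ Cb ∩ U := ⟨h1, h2⟩
      rw [← hBb'] at hm
      rw [hBa] at hm
      exact hm.1
    rw [hCa, mem_add_iff_proj ha hK₀X] at h3
    have he : ((X.linearProjOfIsCompl Ya ha (x + t • y') : X) : V) = x + a := by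
      rw [map_add, Submodule.coe_add, proj_coe_left ha hxX, hadef]
    rwa [he] at h3
  have ha0 : a = 0 := aux_translate hne hK₀R hkey
  have hproj0 : X.linearProjOfIsCompl Ya ha (t • y') = 0 := by
    rwa [hadef, ZeroMemClass.coe_eq_zero] at ha0
  have hmem : t • y' ∈ Ya := by
    have := proj_sub_mem ha (t • y')
    rwa [hproj0, Submodule.coe_zero, sub_zero] at this
  have he : y' = t⁻¹ • (t • y') := by
    rw [smul_smul, inv_mul_cancel₀ htpos.ne', one_smul]
  rw [he]
  exact Ya.smul_mem _ hmem

/-- Uniqueness: two `k`-cylinders coinciding with bounded `B` near a `k`-dim `X` are equal. -/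
lemma aux_unique {k : ℕ} {B C C' : Set V} {R : ℝ} (hBb : B ⊆ closedBall 0 R)
    (h0 : (0 : V) ∈ B) {X : Submodule ℝ V} (hX : Module.finrank ℝ X = k)
    (hC : IsCylinder k C) (hC' : IsCylinder k C')
    (h1 : CoincideNear B C X) (h2 : CoincideNear B C' X) : C = C' := by
  obtain ⟨U₁, hU₁o, hXU₁, he₁⟩ := h1
  obtain ⟨U₂, hU₂o, hXU₂, he₂⟩ := h2
  have hUo : IsOpen (U₁ ∩ U₂) := hU₁o.inter hU₂o
  have hXU : (X : Set V) ⊆ U₁ ∩ U₂ := subset_inter hXU₁ hXU₂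
  have hBC : B ∩ (U₁ ∩ U₂) = C ∩ (U₁ ∩ U₂) := by
    calc B ∩ (U₁ ∩ U₂) = (B ∩ U₁) ∩ U₂ := (inter_assoc _ _ _).symm
    _ = (C ∩ U₁) ∩ U₂ := by rw [he₁]
    _ = C ∩ (U₁ ∩ U₂) := inter_assoc _ _ _
  have hBC' : B ∩ (U₁ ∩ U₂) = C' ∩ (U₁ ∩ U₂) := by
    calc B ∩ (U₁ ∩ U₂) = (B ∩ U₂) ∩ U₁ := by rw [inter_comm U₁ U₂, ← inter_assoc]
    _ = (C' ∩ U₂) ∩ U₁ := by rw [he₂]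
    _ = C' ∩ (U₁ ∩ U₂) := by rw [inter_assoc, inter_comm U₂ U₁]
  obtain ⟨Y, hcY, hCeq⟩ := aux_rebase hBb h0 hX hC hXU hBC
  obtain ⟨Y', hcY', hC'eq⟩ := aux_rebase hBb h0 hX hC' hXU hBC'
  have hs1 : Y' ≤ Y := aux_sub hcY hcY' hCeq hC'eq hUo hXU hBC hBC' hBb h0
  have hs2 : Y ≤ Y' := aux_sub hcY' hcY hC'eq hCeq hUo hXU hBC' hBC hBb h0
  rw [hCeq, hC'eq, le_antisymm hs2 hs1]

/-- Quantitative openness: if `B` coincides with the cylinder `C` near `span v`,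
the same holds near `span v'` for all `v'` close to `v`. -/
lemma aux_core {k : ℕ} {B C : Set V} {R : ℝ} (hR : 0 < R) (hBb : B ⊆ closedBall 0 R)
    (h0 : (0 : V) ∈ B) (hcyl : IsCylinder k C) {v : Fin k → V}
    (hv : LinearIndependent ℝ v)
    (hcoin : CoincideNear B C (Submodule.span ℝ (Set.range v))) :
    ∃ δ > 0, ∀ v' : Fin k → V, (∀ i, ‖v' i - v i‖ < δ) →
      CoincideNear B C (Submodule.span ℝ (Set.range v')) := by
  obtain ⟨U, hUo, hXU, hBU⟩ := hcoin
  set X := Submodule.span ℝ (Set.range v) with hXdef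
  have hXk : Module.finrank ℝ X = k := by
    rw [hXdef, finrank_span_eq_card hv, Fintype.card_fin]
  obtain ⟨Y, hcompl, hCeq⟩ := aux_rebase hBb h0 hXk hcyl hXU hBU
  set K₀ : Set V := B ∩ (X : Set V) with hK₀def
  have hK₀X : K₀ ⊆ (X : Set V) := inter_subset_right
  set P : V →ₗ[ℝ] V := X.subtype ∘ₗ (X.linearProjOfIsCompl Y hcompl) with hPdef
  have hPapp : ∀ w, P w = ((X.linearProjOfIsCompl Y hcompl w : X) : V) := fun w => rfl
  have hmemC : ∀ w, w ∈ C ↔ P w ∈ K₀ := by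
    intro w
    rw [hCeq, hPapp]
    exact mem_add_iff_proj hcompl hK₀X w
  have hPcont : Continuous P := P.continuous_of_finiteDimensional
  have hPX : ∀ x ∈ X, P x = x := by
    intro x hx; rw [hPapp]; exact proj_coe_left hcompl hx
  set Q : V →ₗ[ℝ] V := LinearMap.id - P with hQdef
  have hQapp : ∀ w, Q w = w - P w := fun w => rfl
  have hQv : ∀ i, Q (v i) = 0 := by
    intro i
    rw [hQapp, hPX _ (Submodule.subset_span (mem_range_self i)), sub_self]
  set Qc := LinearMap.toContinuousLinearMap Q with hQcdef
  have hQc : ∀ w, Qc w = Q w := fun w => rfl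
  set CQ := ‖Qc‖ with hCQdef
  have hCQ0 : 0 ≤ CQ := ContinuousLinearMap.opNorm_nonneg Qc
  obtain ⟨m, hm, hmle⟩ := aux_anti hv
  set R₁ : ℝ := 2 * R + 2 with hR₁def
  have hR₁pos : 0 < R₁ := by linarith
  have hKcpt : IsCompact ((X : Set V) ∩ closedBall 0 (R₁ + 1)) :=
    (isCompact_closedBall (0 : V) (R₁ + 1)).inter_left (Submodule.closed_of_finiteDimensional X)
  have hKU : (X : Set V) ∩ closedBall 0 (R₁ + 1) ⊆ U := fun w hw => hXU hw.1
  obtain ⟨ε, hε, hthick⟩ := hKcpt.exists_thickening_subset_open hUo hKU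
  set ε' := min ε 1 with hε'def
  have hε' : 0 < ε' := lt_min hε one_pos
  have hε'le : ε' ≤ ε := min_le_left _ _
  have hε'1 : ε' ≤ 1 := min_le_right _ _
  set δ : ℝ := min (m / (2 * (k + 1)))
    (min (m / (4 * (k + 1) * (CQ + 1))) ((m * ε') / (4 * (k + 1) * (R₁ + 1)))) with hδdef
  have hδ1 : δ ≤ m / (2 * (k + 1)) := min_le_left _ _
  have hδ2 : δ ≤ m / (4 * (k + 1) * (CQ + 1)) := le_trans (min_le_right _ _) (min_le_left _ _)
  have hδ3 : δ ≤ (m * ε') / (4 * (k + 1) * (R₁ + 1)) :=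
    le_trans (min_le_right _ _) (min_le_right _ _)
  have hδpos : 0 < δ := by
    apply lt_min
    · positivity
    apply lt_min
    · positivity
    · positivity
  have hk0 : (0 : ℝ) ≤ (k : ℝ) := Nat.cast_nonneg k
  refine ⟨δ, hδpos, fun v' hv' => ?_⟩
  have hd : ∀ i, ‖v' i - v i‖ ≤ δ := fun i => (hv' i).le
  -- (f0)
  have f0 : ∀ c : Fin k → ℝ,
      ‖(∑ i, c i • v' i) - (∑ i, c i • v i)‖ ≤ (k : ℝ) * δ * ‖c‖ := by
    intro c
    have he : (∑ i, c i • v' i) - (∑ i, c i • v i) = ∑ i, c i • (v' i - v i) := by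
      rw [← Finset.sum_sub_distrib]
      exact Finset.sum_congr rfl fun i _ => (smul_sub _ _ _).symm
    rw [he]
    calc ‖∑ i, c i • (v' i - v i)‖ ≤ ∑ i, ‖c i • (v' i - v i)‖ := norm_sum_le _ _
    _ ≤ ∑ _i : Fin k, ‖c‖ * δ := by
        apply Finset.sum_le_sum
        intro i _
        rw [norm_smul]
        exact mul_le_mul (norm_le_pi_norm c i) (hd i) (norm_nonneg _)
          (norm_nonneg _)
    _ = (k : ℝ) * δ * ‖c‖ := by
        rw [Finset.sum_const, Finset.card_univ, Fintype.card_fin, nsmul_eq_mul]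
        ring
  -- (f2)
  have f2 : ∀ c : Fin k → ℝ, ‖c‖ ≤ 2 / m * ‖∑ i, c i • v' i‖ := by
    intro c
    have h1 : m * ‖c‖ ≤ ‖∑ i, c i • v i‖ := hmle c
    have h2 : ‖∑ i, c i • v i‖ ≤ ‖∑ i, c i • v' i‖ + (k : ℝ) * δ * ‖c‖ := by
      have h3 := f0 c
      have h4 : ‖∑ i, c i • v i‖ ≤ ‖∑ i, c i • v' i‖ +
          ‖(∑ i, c i • v' i) - (∑ i, c i • v i)‖ := by
        have he : (∑ i, c i • v i) =
            (∑ i, c i • v' i) - ((∑ i, c i • v' i) - (∑ i, c i • v i)) := by abel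
        calc ‖∑ i, c i • v i‖ = ‖(∑ i, c i • v' i) -
            ((∑ i, c i • v' i) - (∑ i, c i • v i))‖ := by rw [← he]
        _ ≤ _ := norm_sub_le _ _
      linarith
    have h3 : (k : ℝ) * δ * ‖c‖ ≤ m / 2 * ‖c‖ := by
      have hkk : (k : ℝ) * δ ≤ m / 2 := by
        have hd1 : δ * (2 * ((k : ℝ) + 1)) ≤ m := by
          have h2k : (0 : ℝ) < 2 * ((k : ℝ) + 1) := by positivity
          rw [← le_div_iff₀ h2k]
          exact hδ1
        nlinarith [hδpos.le]
      nlinarith [norm_nonneg c]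
    have h5 : m / 2 * ‖c‖ ≤ ‖∑ i, c i • v' i‖ := by linarith
    have h6 := mul_le_mul_of_nonneg_left h5 (by positivity : (0:ℝ) ≤ 2 / m)
    have h7 : 2 / m * (m / 2 * ‖c‖) = ‖c‖ := by
      have h8 : 2 / m * (m / 2 * ‖c‖) = (m / m) * ‖c‖ := by ring
      rw [h8, div_self hm.ne', one_mul]
    rwa [h7] at h6
  -- (f3)
  have f3 : ∀ c : Fin k → ℝ, ‖Q (∑ i, c i • v' i)‖ ≤ 1 / 2 * ‖∑ i, c i • v' i‖ := by
    intro c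
    have hq0 : Q (∑ i, c i • v i) = 0 := by
      rw [map_sum]
      apply Finset.sum_eq_zero
      intro i _
      rw [map_smul, hQv i, smul_zero]
    have hq : Q (∑ i, c i • v' i) = Q ((∑ i, c i • v' i) - (∑ i, c i • v i)) := by
      rw [map_sub, hq0, sub_zero]
    have h1 : ‖Q (∑ i, c i • v' i)‖ ≤ CQ * ((k : ℝ) * δ * ‖c‖) := by
      rw [hq]
      calc ‖Q ((∑ i, c i • v' i) - (∑ i, c i • v i))‖
          = ‖Qc ((∑ i, c i • v' i) - (∑ i, c i • v i))‖ := by rw [hQc]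
      _ ≤ CQ * ‖(∑ i, c i • v' i) - (∑ i, c i • v i)‖ := Qc.le_opNorm _
      _ ≤ CQ * ((k : ℝ) * δ * ‖c‖) := mul_le_mul_of_nonneg_left (f0 c) hCQ0
    have h2 : CQ * ((k : ℝ) * δ * ‖c‖) ≤ CQ * ((k : ℝ) * δ * (2 / m * ‖∑ i, c i • v' i‖)) := by
      apply mul_le_mul_of_nonneg_left _ hCQ0
      apply mul_le_mul_of_nonneg_left (f2 c) (by positivity)
    have hkey : CQ * ((k : ℝ) * δ) * (2 / m) ≤ 1 / 2 := by
      have hd2 : δ * (4 * ((k : ℝ) + 1) * (CQ + 1)) ≤ m := by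
        have hp : (0 : ℝ) < 4 * ((k : ℝ) + 1) * (CQ + 1) := by positivity
        rw [← le_div_iff₀ hp]
        exact hδ2
      have hgoal : CQ * ((k : ℝ) * δ) * 2 * 2 ≤ m := by
        nlinarith [hδpos.le, hCQ0, hk0, mul_nonneg hδpos.le hCQ0,
          mul_nonneg hδpos.le hk0, mul_nonneg (mul_nonneg hδpos.le hCQ0) hk0]
      have he : CQ * ((k : ℝ) * δ) * (2 / m) = (CQ * ((k : ℝ) * δ) * 2) / m := by
        ring
      rw [he, div_le_div_iff₀ hm (by norm_num : (0:ℝ) < 2)]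
      linarith
    have h3 : CQ * ((k : ℝ) * δ * (2 / m * ‖∑ i, c i • v' i‖))
        = (CQ * ((k : ℝ) * δ) * (2 / m)) * ‖∑ i, c i • v' i‖ := by ring
    have h4 : (CQ * ((k : ℝ) * δ) * (2 / m)) * ‖∑ i, c i • v' i‖
        ≤ 1 / 2 * ‖∑ i, c i • v' i‖ :=
      mul_le_mul_of_nonneg_right hkey (norm_nonneg _)
    linarith
  -- (ii)
  have fii : ∀ w ∈ Submodule.span ℝ (Set.range v'), ‖P w‖ ≤ R → ‖w‖ ≤ R₁ := by
    intro w hw hPw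
    obtain ⟨c, rfl⟩ := (Submodule.mem_span_range_iff_exists_fun ℝ).mp hw
    have h1 := f3 c
    have h2 : ‖∑ i, c i • v' i‖ ≤ ‖P (∑ i, c i • v' i)‖ + ‖Q (∑ i, c i • v' i)‖ := by
      have he : (∑ i, c i • v' i) = P (∑ i, c i • v' i) +
          ((∑ i, c i • v' i) - P (∑ i, c i • v' i)) := by abel
      rw [hQapp]
      calc ‖∑ i, c i • v' i‖ = ‖P (∑ i, c i • v' i) +
          ((∑ i, c i • v' i) - P (∑ i, c i • v' i))‖ := by rw [← he]
      _ ≤ _ := norm_add_le _ _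
    rw [hR₁def]
    linarith
  -- (i)
  have fi : ∀ w ∈ Submodule.span ℝ (Set.range v'), ‖w‖ ≤ R₁ → w ∈ U := by
    intro w hw hwn
    obtain ⟨c, rfl⟩ := (Submodule.mem_span_range_iff_exists_fun ℝ).mp hw
    set x := ∑ i, c i • v i with hxdef
    have hcb : ‖c‖ ≤ 2 / m * R₁ := by
      calc ‖c‖ ≤ 2 / m * ‖∑ i, c i • v' i‖ := f2 c
      _ ≤ 2 / m * R₁ := mul_le_mul_of_nonneg_left hwn (by positivity)
    have hwx : ‖(∑ i, c i • v' i) - x‖ ≤ (k : ℝ) * δ * (2 / m * R₁) := by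
      calc ‖(∑ i, c i • v' i) - x‖ ≤ (k : ℝ) * δ * ‖c‖ := f0 c
      _ ≤ (k : ℝ) * δ * (2 / m * R₁) :=
          mul_le_mul_of_nonneg_left hcb (by positivity)
    have hsmall : (k : ℝ) * δ * (2 / m * R₁) ≤ ε' / 2 := by
      have hd3 : δ * (4 * ((k : ℝ) + 1) * (R₁ + 1)) ≤ m * ε' := by
        have hp : (0 : ℝ) < 4 * ((k : ℝ) + 1) * (R₁ + 1) := by positivity
        rw [← le_div_iff₀ hp]
        exact hδ3
      have key : (k : ℝ) * δ * 2 * R₁ * 2 ≤ m * ε' := by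
        nlinarith [hδpos.le, hk0, hR₁pos.le]
      have he : (k : ℝ) * δ * (2 / m * R₁) = ((k : ℝ) * δ * 2 * R₁) / m := by ring
      rw [he, div_le_div_iff₀ hm (by norm_num : (0:ℝ) < 2)]
      linarith
    have hxX : x ∈ X := by
      apply Submodule.sum_mem
      intro i _
      exact X.smul_mem _ (Submodule.subset_span (mem_range_self i))
    have hxball : x ∈ closedBall 0 (R₁ + 1) := by
      rw [mem_closedBall_zero_iff]
      have h1 : ‖x‖ ≤ ‖∑ i, c i • v' i‖ + ‖x - (∑ i, c i • v' i)‖ := by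
        have he : x = (∑ i, c i • v' i) + (x - (∑ i, c i • v' i)) := by abel
        calc ‖x‖ = ‖(∑ i, c i • v' i) + (x - (∑ i, c i • v' i))‖ := by rw [← he]
        _ ≤ _ := norm_add_le _ _
      have h2 : ‖x - (∑ i, c i • v' i)‖ = ‖(∑ i, c i • v' i) - x‖ := norm_sub_rev _ _
      have h3 : ε' / 2 ≤ 1 := by linarith
      linarith
    apply hthick
    rw [Metric.mem_thickening_iff]
    refine ⟨x, ⟨hxX, hxball⟩, ?_⟩
    rw [dist_eq_norm]
    calc ‖(∑ i, c i • v' i) - x‖ ≤ ε' / 2 := le_trans hwx hsmall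
    _ < ε' := by linarith
    _ ≤ ε := hε'le
  -- assemble
  set D : Set V := (fun w => P w) ⁻¹' (closedBall 0 R) with hDdef
  have hDcl : IsClosed D := IsClosed.preimage hPcont Metric.isClosed_closedBall
  have hCD : C ⊆ D := by
    intro w hw
    have h1 := (hmemC w).mp hw
    have h2 : P w ∈ B := h1.1
    exact hBb h2
  set U' : Set V := (U ∩ ball (0 : V) (R₁ + 1)) ∪ ({w : V | R₁ < ‖w‖} ∩ Dᶜ) with hU'def
  have hU'o : IsOpen U' := by
    apply IsOpen.union (hUo.inter isOpen_ball)
    exact (isOpen_lt continuous_const continuous_norm).inter hDcl.isOpen_compl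
  refine ⟨U', hU'o, ?_, ?_⟩
  · intro w hw
    by_cases hcase : ‖w‖ ≤ R₁
    · left
      refine ⟨fi w hw hcase, ?_⟩
      rw [mem_ball_zero_iff]
      linarith
    · right
      refine ⟨lt_of_not_ge hcase, ?_⟩
      intro hD'
      apply hcase
      apply fii w hw
      rw [hDdef] at hD'
      rwa [mem_preimage, mem_closedBall_zero_iff] at hD'
  · ext w
    constructor
    · rintro ⟨hwB, hwU'⟩
      have hwRn : ‖w‖ ≤ R := mem_closedBall_zero_iff.mp (hBb hwB)
      have hwU : w ∈ U ∧ w ∈ ball (0 : V) (R₁ + 1) := by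
        rcases hwU' with h1 | h2
        · exact h1
        · exfalso
          have := h2.1
          simp only [mem_setOf_eq] at this
          linarith
      have hwC : w ∈ C := by
        have hm' : w ∈ B ∩ U := ⟨hwB, hwU.1⟩
        rw [hBU] at hm'
        exact hm'.1
      exact ⟨hwC, Or.inl hwU⟩
    · rintro ⟨hwC, hwU'⟩
      have hwU : w ∈ U ∧ w ∈ ball (0 : V) (R₁ + 1) := by
        rcases hwU' with h1 | h2
        · exact h1
        · exact absurd (hCD hwC) h2.2
      have hwB : w ∈ B := by
        have hm' : w ∈ C ∩ U := ⟨hwC, hwU.1⟩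
        rw [← hBU] at hm'
        exact hm'.1
      exact ⟨hwB, Or.inl hwU⟩

/-- Openness of the coincidence locus in the Grassmannian. -/
lemma aux_isOpen {k : ℕ} {B C : Set V} {R : ℝ} (hR : 0 < R) (hBb : B ⊆ closedBall 0 R)
    (h0 : (0 : V) ∈ B) (hcyl : IsCylinder k C) :
    IsOpen {X : Gr k V | CoincideNear B C X.1} := by
  have hpre : IsOpen ((fun v : {v : Fin k → V // LinearIndependent ℝ v} =>
      (⟨Submodule.span ℝ (Set.range v.1), by
          rw [finrank_span_eq_card v.2, Fintype.card_fin]⟩ : Gr k V))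
      ⁻¹' {X : Gr k V | CoincideNear B C X.1}) := by
    rw [isOpen_iff_mem_nhds]
    rintro ⟨v, hvli⟩ hmem
    simp only [mem_preimage, mem_setOf_eq] at hmem
    obtain ⟨δ, hδ, hδ'⟩ := aux_core hR hBb h0 hcyl hvli hmem
    have hball : Subtype.val ⁻¹' (Metric.ball v δ) ∈
        nhds (⟨v, hvli⟩ : {v : Fin k → V // LinearIndependent ℝ v}) :=
      (Metric.isOpen_ball.preimage continuous_subtype_val).mem_nhds
        (by simp [Metric.mem_ball, dist_self, hδ])
    filter_upwards [hball] with p hp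
    simp only [mem_preimage, mem_setOf_eq]
    apply hδ'
    intro i
    have hlt := (dist_pi_lt_iff hδ).mp (Metric.mem_ball.mp hp) i
    rwa [dist_eq_norm] at hlt
  exact isOpen_coinduced.mpr hpre

/-- Minkowski norms vanish at the origin. -/
lemma phi_zero {Φ : V → ℝ} (hΦ : IsMinkowskiNorm Φ) : Φ 0 = 0 := by
  have := hΦ.1.2.1 0 0 le_rfl
  simpa using this

/-- Upper bound for a Minkowski norm in terms of the ambient norm. -/
lemma phi_upper {Φ : V → ℝ} (hΦ : IsMinkowskiNorm Φ) :
    ∃ M : ℝ, 0 < M ∧ ∀ w, Φ w ≤ M * ‖w‖ := by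
  have hz : Φ 0 = 0 := phi_zero hΦ
  obtain ⟨⟨hpos, hhom, hadd⟩, _⟩ := hΦ
  have hsmul : ∀ (a : ℝ) (w : V), Φ (a • w) ≤ |a| * (Φ w + Φ (-w)) := by
    intro a w
    rcases le_or_gt 0 a with hc | hc
    · rw [hhom a w hc, abs_of_nonneg hc]
      nlinarith [hpos w, hpos (-w)]
    · have he : a • w = (-a) • (-w) := by rw [neg_smul, smul_neg, neg_neg]
      rw [he, hhom (-a) (-w) (by linarith), abs_of_neg hc]
      nlinarith [hpos w, hpos (-w)]
  set b := Module.finBasis ℝ V with hbdef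
  set Mi : Fin (Module.finrank ℝ V) → ℝ := fun i => Φ (b i) + Φ (-(b i)) with hMidef
  have hMi0 : ∀ i, 0 ≤ Mi i := fun i => by
    have := hpos (b i); have := hpos (-(b i)); simp only [hMidef]; linarith
  set Ci : Fin (Module.finrank ℝ V) → ℝ := fun i =>
    ‖LinearMap.toContinuousLinearMap (b.coord i)‖ with hCidef
  have hCi0 : ∀ i, 0 ≤ Ci i := fun i =>
    ContinuousLinearMap.opNorm_nonneg (LinearMap.toContinuousLinearMap (b.coord i))
  have hsum0 : 0 ≤ ∑ i, Ci i * Mi i :=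
    Finset.sum_nonneg fun i _ => mul_nonneg (hCi0 i) (hMi0 i)
  refine ⟨∑ i, Ci i * Mi i + 1, by linarith, fun w => ?_⟩
  have hrepr : ∑ i, b.repr w i • b i = w := b.sum_repr w
  calc Φ w = Φ (∑ i, b.repr w i • b i) := by rw [hrepr]
  _ ≤ ∑ i, Φ (b.repr w i • b i) := Finset.le_sum_of_subadditive Φ hz.le hadd _ _
  _ ≤ ∑ i, (Ci i * Mi i) * ‖w‖ := by
      apply Finset.sum_le_sum
      intro i _
      have hco : |b.repr w i| ≤ Ci i * ‖w‖ := by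
        have h1 := (LinearMap.toContinuousLinearMap (b.coord i)).le_opNorm w
        have h2 : (LinearMap.toContinuousLinearMap (b.coord i)) w = b.repr w i := by
          simp [Basis.coord_apply]
        rw [h2, Real.norm_eq_abs] at h1
        exact h1
      calc Φ (b.repr w i • b i) ≤ |b.repr w i| * Mi i := hsmul _ _
      _ ≤ (Ci i * ‖w‖) * Mi i := mul_le_mul_of_nonneg_right hco (hMi0 i)
      _ = (Ci i * Mi i) * ‖w‖ := by ring
  _ = (∑ i, Ci i * Mi i) * ‖w‖ := by rw [← Finset.sum_mul]
  _ ≤ (∑ i, Ci i * Mi i + 1) * ‖w‖ := by nlinarith [norm_nonneg w]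

/-- Lower bound for a Minkowski norm in terms of the ambient norm. -/
lemma phi_lower [Nontrivial V] {Φ : V → ℝ} (hΦ : IsMinkowskiNorm Φ) :
    ∃ m : ℝ, 0 < m ∧ ∀ w, m * ‖w‖ ≤ Φ w := by
  obtain ⟨M, hM, hMle⟩ := phi_upper hΦ
  have hz : Φ 0 = 0 := phi_zero hΦ
  obtain ⟨⟨hpos, hhom, hadd⟩, hposd⟩ := hΦ
  have hcont : Continuous Φ := by
    apply LipschitzWith.continuous (K := M.toNNReal)
    apply LipschitzWith.of_dist_le_mul
    intro x y
    rw [Real.dist_eq, dist_eq_norm, Real.coe_toNNReal M hM.le, abs_sub_le_iff]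
    constructor
    · have h1 := hadd y (x - y)
      have he : y + (x - y) = x := by abel
      rw [he] at h1
      have h2 := hMle (x - y)
      linarith
    · have h1 := hadd x (y - x)
      have he : x + (y - x) = y := by abel
      rw [he] at h1
      have h2 := hMle (y - x)
      rw [norm_sub_rev] at h2
      linarith
  have hsne : (Metric.sphere (0 : V) 1).Nonempty :=
    NormedSpace.sphere_nonempty.mpr zero_le_one
  obtain ⟨x₀, hx₀s, hx₀min⟩ :=
    (isCompact_sphere (0 : V) 1).exists_isMinOn hsne hcont.continuousOn
  have hx₀n : ‖x₀‖ = 1 := mem_sphere_zero_iff_norm.mp hx₀s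
  have hm : 0 < Φ x₀ := by
    apply hposd
    intro hc
    rw [hc, norm_zero] at hx₀n
    norm_num at hx₀n
  refine ⟨Φ x₀, hm, fun w => ?_⟩
  rcases eq_or_ne w 0 with rfl | hw
  · simp [hz]
  · have hwn : 0 < ‖w‖ := norm_pos_iff.mpr hw
    have hmem : ‖w‖⁻¹ • w ∈ Metric.sphere (0 : V) 1 := by
      rw [mem_sphere_zero_iff_norm, norm_smul, norm_inv, norm_norm,
        inv_mul_cancel₀ hwn.ne']
    have h1 : Φ x₀ ≤ Φ (‖w‖⁻¹ • w) := hx₀min hmem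
    have h2 : Φ w = ‖w‖ * Φ (‖w‖⁻¹ • w) := by
      rw [← hhom ‖w‖ (‖w‖⁻¹ • w) (norm_nonneg w), smul_smul,
        mul_inv_cancel₀ hwn.ne', one_smul]
    rw [h2]
    nlinarith

end AuxLemmas

/-- **Propagation of local cylindricity.** If the unit ball `B` is locally cylindrical
near every `X` in a nonempty connected open set `𝒰`, then there is a single `k`-cylinder
`C` with `B ∩ X = C ∩ X` for all `X ∈ 𝒰`. -/
theorem propagation_of_local_cylindricity
    {V : Type*} [NormedAddCommGroup V] [NormedSpace ℝ V] [FiniteDimensional ℝ V]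
    (n k : ℕ) (hn : Module.finrank ℝ V = n)
    (Φ : V → ℝ) (hΦ : IsMinkowskiNorm Φ) (B : Set V) (hB : B = {v | Φ v ≤ 1})
    (𝒰 : Set (Gr k V)) (h𝒰open : IsOpen 𝒰) (h𝒰conn : IsConnected 𝒰)
    (h : ∀ X ∈ 𝒰, IsLocallyCylindricalNear k B X.1) :
    ∃ C : Set V, IsCylinder k C ∧
      ∀ X ∈ 𝒰, B ∩ (X.1 : Set V) = C ∩ (X.1 : Set V) := by
  have h0B : (0 : V) ∈ B := by
    rw [hB]
    show Φ 0 ≤ 1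
    rw [phi_zero hΦ]
    norm_num
  rcases Nat.eq_zero_or_pos k with hk0 | hkpos
  · -- degenerate case k = 0 : the 0-cylinder is the whole space
    subst hk0
    refine ⟨Set.univ, ⟨{0}, ⊥, finrank_bot ℝ V, ?_, isCompact_singleton,
      convex_singleton 0, ?_, ⊤, isCompl_bot_top, ?_⟩, ?_⟩
    · intro x hx
      simp only [mem_singleton_iff] at hx
      subst hx
      exact Submodule.zero_mem ⊥
    · have he : ((↑) ⁻¹' ({0} : Set V) : Set (⊥ : Submodule ℝ V)) = Set.univ := by
        ext x
        simpa using (Submodule.mem_bot ℝ).mp x.2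
      rw [he, interior_univ]
      exact ⟨⟨0, Submodule.zero_mem ⊥⟩, trivial⟩
    · rw [Submodule.top_coe]
      ext w
      simp only [mem_univ, true_iff]
      exact Set.mem_add.mpr ⟨0, Set.mem_singleton 0, w, Set.mem_univ w, zero_add w⟩
    · intro X hX
      have hXbot : X.1 = ⊥ := Submodule.finrank_eq_zero.mp X.2
      rw [hXbot, Submodule.bot_coe, univ_inter,
        inter_eq_self_of_subset_right (singleton_subset_iff.mpr h0B)]
  · -- main case k ≥ 1
    obtain ⟨X₀, hX₀𝒰⟩ := h𝒰conn.nonempty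
    have hVnt : Nontrivial V := by
      have h1 : 0 < Module.finrank ℝ X₀.1 := by rw [X₀.2]; exact hkpos
      have h2 : Nontrivial X₀.1 := Module.finrank_pos_iff.mp h1
      obtain ⟨x, y, hxy⟩ := h2
      exact ⟨⟨(x : V), (y : V), fun hc => hxy (Subtype.ext hc)⟩⟩
    obtain ⟨m, hm, hml⟩ := phi_lower hΦ
    set R : ℝ := m⁻¹ + 1 with hRdef
    have hR : 0 < R := by positivity
    have hBb : B ⊆ Metric.closedBall 0 R := by
      intro w hw
      rw [hB] at hw
      rw [mem_closedBall_zero_iff]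
      have h1 : m * ‖w‖ ≤ 1 := le_trans (hml w) hw
      have h2 : ‖w‖ = m⁻¹ * (m * ‖w‖) := by
        field_simp
      calc ‖w‖ = m⁻¹ * (m * ‖w‖) := h2
      _ ≤ m⁻¹ * 1 := mul_le_mul_of_nonneg_left h1 (by positivity)
      _ ≤ R := by rw [hRdef]; linarith
    obtain ⟨C, hCcyl, hCco⟩ := h X₀ hX₀𝒰
    refine ⟨C, hCcyl, ?_⟩
    set u : Set (Gr k V) := {X : Gr k V | CoincideNear B C X.1} with hudef
    set v : Set (Gr k V) := ⋃ (C' : Set V) (_ : IsCylinder k C' ∧ C' ≠ C),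
      {X : Gr k V | CoincideNear B C' X.1} with hvdef
    have huo : IsOpen u := aux_isOpen hR hBb h0B hCcyl
    have hvo : IsOpen v := by
      apply isOpen_iUnion
      intro C'
      apply isOpen_iUnion
      intro hC'
      exact aux_isOpen hR hBb h0B hC'.1
    have hdisj : Disjoint u v := by
      rw [Set.disjoint_left]
      intro X hXu hXv
      simp only [hvdef, mem_iUnion, mem_setOf_eq] at hXv
      obtain ⟨C', ⟨hC'cyl, hCC⟩, hco'⟩ := hXv
      exact hCC (aux_unique hBb h0B X.2 hC'cyl hCcyl hco' hXu)
    have hsub : 𝒰 ⊆ u ∪ v := by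
      intro X hX𝒰
      obtain ⟨C', hC'cyl, hco'⟩ := h X hX𝒰
      by_cases hCC : C' = C
      · left
        have hgoal : CoincideNear B C X.1 := by rw [← hCC]; exact hco'
        exact hgoal
      · right
        simp only [hvdef, mem_iUnion]
        exact ⟨C', ⟨hC'cyl, hCC⟩, hco'⟩
    have hne𝒰 : (𝒰 ∩ u).Nonempty := ⟨X₀, hX₀𝒰, hCco⟩
    have hfinal : 𝒰 ⊆ u :=
      h𝒰conn.isPreconnected.subset_left_of_subset_union huo hvo hdisj hsub hne𝒰
    intro X hX
    obtain ⟨U, hUo, hXU, hBU⟩ := hfinal hX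
    ext w
    constructor
    · rintro ⟨hwB, hwX⟩
      have h1 : w ∈ B ∩ U := ⟨hwB, hXU hwX⟩
      rw [hBU] at h1
      exact ⟨h1.1, hwX⟩
    · rintro ⟨hwC, hwX⟩
      have h1 : w ∈ C ∩ U := ⟨hwC, hXU hwX⟩
      rw [← hBU] at h1
      exact ⟨h1.1, hwX⟩
end
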